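/- arXiv:0710.0574 — 7 statements merged into one kernel-verified Lean document; each statement's English description precedes it below -/
import Mathlib

section
/- The bivariate Fibonacci polynomials satisfy the recurrence F̂_{2m+4} = (1+q+t)·F̂_{2m+2} − q·F̂_{2m} for all m ≥ 0. -/
/-- The bivariate Fibonacci polynomial `F̂_{2k}(q,t)`: the sum over subsets `S` of
`{1,…,2k}` containing no two consecutive elements of
`q^(#even elements of S) · t^(k − |S|)`. -/
def FhatSub (q t : ℤ) (k : ℕ) : ℤ :=
  ∑ S ∈ (Finset.Icc 1 (2 * k)).powerset.filter (fun S => ∀ i ∈ S, i + 1 ∉ S),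
    q ^ (S.filter (fun i => Even i)).card * t ^ (k - S.card)

namespace FhatAux

/-- Independent subsets of `{1,…,n}` (no two consecutive elements). -/
def indepSets (n : ℕ) : Finset (Finset ℕ) :=
  (Finset.Icc 1 n).powerset.filter (fun S => ∀ i ∈ S, i + 1 ∉ S)

lemma mem_indepSets {n : ℕ} {S : Finset ℕ} :
    S ∈ indepSets n ↔ S ⊆ Finset.Icc 1 n ∧ ∀ i ∈ S, i + 1 ∉ S := by
  simp [indepSets]

/-- The general weighted sum. -/
def F (q t : ℤ) (n k : ℕ) : ℤ :=
  ∑ S ∈ indepSets n, q ^ (S.filter (fun i => Even i)).card * t ^ (k - S.card)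

lemma FhatSub_eq (q t : ℤ) (k : ℕ) : FhatSub q t k = F q t (2 * k) k := rfl

lemma split (g : Finset ℕ → ℤ) (n : ℕ) :
    ∑ S ∈ indepSets (n + 2), g S =
      ∑ S ∈ indepSets (n + 1), g S + ∑ S ∈ indepSets n, g (insert (n + 2) S) := by
  rw [← Finset.sum_filter_add_sum_filter_not (indepSets (n + 2)) (fun S => n + 2 ∉ S)]
  congr 1
  · congr 1
    ext S
    simp only [Finset.mem_filter, mem_indepSets]
    constructor
    · rintro ⟨⟨hsub, hind⟩, hnot⟩
      refine ⟨fun i hi => ?_, hind⟩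
      have h1 := hsub hi
      simp only [Finset.mem_Icc] at h1 ⊢
      have : i ≠ n + 2 := fun h => hnot (h ▸ hi)
      omega
    · rintro ⟨hsub, hind⟩
      refine ⟨⟨fun i hi => ?_, hind⟩, fun h => ?_⟩
      · have h1 := hsub hi
        simp only [Finset.mem_Icc] at h1 ⊢
        omega
      · have := hsub h
        simp only [Finset.mem_Icc] at this
        omega
  · simp only [not_not]
    refine Finset.sum_bij' (fun S _ => S.erase (n + 2)) (fun S _ => insert (n + 2) S)
      ?_ ?_ ?_ ?_ ?_
    · rintro S hS
      simp only [Finset.mem_filter, mem_indepSets] at hS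
      obtain ⟨⟨hsub, hind⟩, hmem⟩ := hS
      rw [mem_indepSets]
      refine ⟨fun i hi => ?_, fun i hi => fun h => hind i (Finset.mem_of_mem_erase hi)
        (Finset.mem_of_mem_erase h)⟩
      have hi' := Finset.mem_of_mem_erase hi
      have h1 := hsub hi'
      have hne : i ≠ n + 2 := Finset.ne_of_mem_erase hi
      have hne1 : i ≠ n + 1 := by
        intro h
        exact hind i hi' (by rw [h]; exact hmem)
      simp only [Finset.mem_Icc] at h1 ⊢
      omega
    · rintro S hS
      rw [mem_indepSets] at hS
      obtain ⟨hsub, hind⟩ := hS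
      simp only [Finset.mem_filter, mem_indepSets]
      have hnot : n + 2 ∉ S := fun h => by
        have := hsub h; simp only [Finset.mem_Icc] at this; omega
      refine ⟨⟨fun i hi => ?_, fun i hi => ?_⟩, Finset.mem_insert_self _ _⟩
      · rcases Finset.mem_insert.mp hi with h | h
        · simp [Finset.mem_Icc, h]
        · have := hsub h; simp only [Finset.mem_Icc] at this ⊢; omega
      · rcases Finset.mem_insert.mp hi with h | h
        · intro hc
          rcases Finset.mem_insert.mp hc with h' | h'
          · omega
          · have := hsub h'; simp only [Finset.mem_Icc] at this; omega
        · intro hc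
          rcases Finset.mem_insert.mp hc with h' | h'
          · have := hsub h; simp only [Finset.mem_Icc] at this; omega
          · exact hind i h h'
    · rintro S hS
      simp only [Finset.mem_filter] at hS
      exact Finset.insert_erase hS.2
    · rintro S hS
      rw [mem_indepSets] at hS
      have hnot : n + 2 ∉ S := fun h => by
        have := hS.1 h; simp only [Finset.mem_Icc] at this; omega
      exact Finset.erase_insert hnot
    · rintro S hS
      simp only [Finset.mem_filter] at hS
      rw [Finset.insert_erase hS.2]

lemma card_le {n : ℕ} {S : Finset ℕ} (hS : S ∈ indepSets n) : 2 * S.card ≤ n + 1 := by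
  rw [mem_indepSets] at hS
  obtain ⟨hsub, hind⟩ := hS
  have hinj : Set.InjOn (fun i => (i + 1) / 2) S := by
    intro i hi j hj hij
    simp only at hij
    by_contra hne
    rcases Nat.lt_or_ge i j with h | h
    · have : j = i + 1 := by omega
      exact hind i hi (this ▸ hj)
    · have : i = j + 1 := by omega
      exact hind j hj (this ▸ hi)
  have himg : S.image (fun i => (i + 1) / 2) ⊆ Finset.Icc 1 ((n + 1) / 2) := by
    intro x hx
    simp only [Finset.mem_image] at hx
    obtain ⟨i, hi, rfl⟩ := hx
    have := hsub hi
    simp only [Finset.mem_Icc] at this ⊢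
    omega
  have h1 : S.card = (S.image (fun i => (i + 1) / 2)).card :=
    (Finset.card_image_of_injOn hinj).symm
  have h2 := Finset.card_le_card himg
  rw [Nat.card_Icc] at h2
  omega

lemma F_rec (q t : ℤ) (n k : ℕ) :
    F q t (n + 2) (k + 1) =
      F q t (n + 1) (k + 1) + (if Even n then q else 1) * F q t n k := by
  unfold F
  rw [split]
  congr 1
  rw [Finset.mul_sum]
  refine Finset.sum_congr rfl (fun S hS => ?_)
  rw [mem_indepSets] at hS
  have hnot : n + 2 ∉ S := fun h => by
    have := hS.1 h; simp only [Finset.mem_Icc] at this; omega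
  have hcard : (insert (n + 2) S).card = S.card + 1 := Finset.card_insert_of_notMem hnot
  have hexp : k + 1 - (S.card + 1) = k - S.card := by omega
  rw [Finset.filter_insert]
  have heven : Even (n + 2) ↔ Even n := by
    rw [Nat.even_add_one, Nat.even_add_one, not_not]
  by_cases hn : Even n
  · rw [if_pos (heven.mpr hn), if_pos hn]
    have hnotf : n + 2 ∉ S.filter (fun i => Even i) := fun h =>
      hnot (Finset.mem_of_mem_filter _ h)
    rw [Finset.card_insert_of_notMem hnotf, hcard, hexp, pow_succ]
    ring
  · rw [if_neg (fun h => hn (heven.mp h)), if_neg hn, hcard, hexp]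
    ring

lemma F_shift (q t : ℤ) (n k : ℕ) (h : ∀ S ∈ indepSets n, S.card ≤ k) :
    F q t n (k + 1) = t * F q t n k := by
  unfold F
  rw [Finset.mul_sum]
  refine Finset.sum_congr rfl (fun S hS => ?_)
  have hc := h S hS
  have : k + 1 - S.card = (k - S.card) + 1 := by omega
  rw [this, pow_succ]
  ring

end FhatAux

/-- The bivariate Fibonacci polynomials satisfy
`F̂_{2m+4} = (1+q+t)·F̂_{2m+2} − q·F̂_{2m}` for all `m ≥ 0`. -/
theorem fhatSub_recurrence (q t : ℤ) (m : ℕ) :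
    FhatSub q t (m + 2) = (1 + q + t) * FhatSub q t (m + 1) - q * FhatSub q t m := by
  open FhatAux in
  rw [FhatSub_eq, FhatSub_eq, FhatSub_eq]
  have e2 : 2 * (m + 2) = (2 * m + 2) + 2 := by ring
  have e1 : 2 * (m + 1) = 2 * m + 2 := by ring
  rw [e1, e2]
  have h1 : FhatAux.F q t (2 * m + 2 + 2) (m + 1 + 1) =
      FhatAux.F q t (2 * m + 2 + 1) (m + 1 + 1) + q * FhatAux.F q t (2 * m + 2) (m + 1) := by
    have := FhatAux.F_rec q t (2 * m + 2) (m + 1)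
    rwa [if_pos (by exact ⟨m + 1, by ring⟩)] at this
  have h2 : FhatAux.F q t (2 * m + 1 + 2) (m + 1 + 1) =
      FhatAux.F q t (2 * m + 1 + 1) (m + 1 + 1) + FhatAux.F q t (2 * m + 1) (m + 1) := by
    have := FhatAux.F_rec q t (2 * m + 1) (m + 1)
    rwa [if_neg (by simp [Nat.even_add_one, parity_simps]), one_mul] at this
  have h3 : FhatAux.F q t (2 * m + 2) (m + 1 + 1) = t * FhatAux.F q t (2 * m + 2) (m + 1) := by
    refine FhatAux.F_shift q t _ _ (fun S hS => ?_)
    have := FhatAux.card_le hS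
    omega
  have h4 : FhatAux.F q t (2 * m + 2) (m + 1) =
      FhatAux.F q t (2 * m + 1) (m + 1) + q * FhatAux.F q t (2 * m) m := by
    have := FhatAux.F_rec q t (2 * m) m
    rwa [if_pos (by exact ⟨m, by ring⟩)] at this
  -- align indices
  have e3 : 2 * m + 2 + 1 = 2 * m + 1 + 2 := by ring
  have e4 : 2 * m + 1 + 1 = 2 * m + 2 := by ring
  rw [e3] at h1
  rw [e4] at h2
  -- need F (2m+1) (m+1) in terms; from h4: F(2m+1)(m+1) = F(2m+2)(m+1) - q F(2m) m
  have goal' : FhatAux.F q t (2 * m + 2 + 2) (m + 2) =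
      (1 + q + t) * FhatAux.F q t (2 * m + 2) (m + 1) - q * FhatAux.F q t (2 * m) m := by
    have hm : m + 2 = m + 1 + 1 := rfl
    rw [hm]
    linear_combination h1 + h2 + h3 - h4
  exact goal'
end

section
/- Counting binary chains: the number of sequences of length 2m+4 over {black, white} with no two consecutive black beads, weighted by q to the power of the number of black beads in even positions and t to the power of (m+2 minus the number of black beads), equals (1+q+t) times the analogous weighted count for length 2m+2 minus q times the count for length 2m. -/
/-- Weighted count of chains of `n = 2k` beads (functions `{1,…,2k} → Bool`,
`true` = black) with no two consecutive black beads, where a chain with black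
set `S` has weight `q^(#black beads in even positions) · t^(k − #black beads)`.
Position of index `i : Fin (2k)` is `i + 1`. -/
def chainSum (q t : ℤ) (k : ℕ) : ℤ :=
  ∑ f ∈ (Finset.univ : Finset (Fin (2 * k) → Bool)).filter
      (fun f => ∀ i j : Fin (2 * k), (j : ℕ) = (i : ℕ) + 1 → f i = true → f j = false),
    q ^ (Finset.univ.filter (fun i : Fin (2 * k) => f i = true ∧ Even ((i : ℕ) + 1))).card *
      t ^ (k - (Finset.univ.filter (fun i : Fin (2 * k) => f i = true)).card)

open Finset

namespace ChainAux

def OkP {n : ℕ} (f : Fin n → Bool) : Prop :=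
  ∀ i j : Fin n, (j : ℕ) = (i : ℕ) + 1 → f i = true → f j = false

instance {n : ℕ} : DecidablePred (OkP (n := n)) := fun f => by
  unfold OkP; infer_instance

def headB {n : ℕ} (f : Fin n → Bool) : Bool :=
  if h : 0 < n then f ⟨0, h⟩ else false

def blackc {n : ℕ} (f : Fin n → Bool) : ℕ :=
  (univ.filter (fun i : Fin n => f i = true)).card

def evenc {n : ℕ} (f : Fin n → Bool) : ℕ :=
  (univ.filter (fun i : Fin n => f i = true ∧ Even ((i : ℕ) + 1))).card

def wt (q t : ℤ) (n : ℕ) (f : Fin n → Bool) : ℤ :=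
  q ^ evenc f * t ^ (n / 2 - blackc f)

def A (q t : ℤ) (n : ℕ) : ℤ :=
  ∑ f ∈ (univ : Finset (Fin n → Bool)).filter (fun f => OkP f), wt q t n f

def Tb (q t : ℤ) (n : ℕ) (s : Bool) : ℤ :=
  ∑ f ∈ (univ : Finset (Fin n → Bool)).filter (fun f => OkP f ∧ headB f = s), wt q t n f

lemma cons2_zero {n : ℕ} (a b : Bool) (g : Fin n → Bool) (h : 0 < n + 2) :
    (Fin.cons a (Fin.cons b g) : Fin (n + 2) → Bool) ⟨0, h⟩ = a := rfl

lemma cons2_one {n : ℕ} (a b : Bool) (g : Fin n → Bool) (h : 1 < n + 2) :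
    (Fin.cons a (Fin.cons b g) : Fin (n + 2) → Bool) ⟨1, h⟩ = b := rfl

lemma cons2_two {n : ℕ} (a b : Bool) (g : Fin n → Bool) (i : ℕ) (h : i + 2 < n + 2) :
    (Fin.cons a (Fin.cons b g) : Fin (n + 2) → Bool) ⟨i + 2, h⟩ = g ⟨i, by omega⟩ := rfl

lemma headB_cons2 {n : ℕ} (a b : Bool) (g : Fin n → Bool) :
    headB (Fin.cons a (Fin.cons b g) : Fin (n + 2) → Bool) = a := by
  unfold headB
  rw [dif_pos (by omega)]
  exact cons2_zero a b g (by omega)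

lemma ok_cons {n : ℕ} (a b : Bool) (g : Fin n → Bool) :
    OkP (Fin.cons a (Fin.cons b g) : Fin (n + 2) → Bool) ↔
      (a = true → b = false) ∧ (b = true → headB g = false) ∧ OkP g := by
  constructor
  · intro H
    refine ⟨?_, ?_, ?_⟩
    · intro ha
      have := H ⟨0, by omega⟩ ⟨1, by omega⟩ rfl (by rw [cons2_zero]; exact ha)
      rwa [cons2_one] at this
    · intro hb
      unfold headB
      split_ifs with hn
      · have := H ⟨1, by omega⟩ ⟨0 + 2, by omega⟩ rfl (by rw [cons2_one]; exact hb)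
        rwa [cons2_two] at this
      · rfl
    · intro i j hj hi
      have := H ⟨(i : ℕ) + 2, by omega⟩ ⟨(j : ℕ) + 2, by omega⟩ (by simp; omega)
        (by rw [cons2_two]; simpa using hi)
      rw [cons2_two] at this
      simpa using this
  · rintro ⟨h1, h2, h3⟩ i j hj hi
    obtain ⟨iv, hiv⟩ := i
    obtain ⟨jv, hjv⟩ := j
    simp only at hj
    subst hj
    match iv, hiv, hjv with
    | 0, hiv, hjv =>
        rw [cons2_one]
        exact h1 (by rwa [cons2_zero] at hi)
    | 1, hiv, hjv =>
        have hb := h2 (by rwa [cons2_one] at hi)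
        unfold headB at hb
        rw [dif_pos (by omega)] at hb
        show g ⟨0, by omega⟩ = false
        exact hb
    | (r + 2), hiv, hjv =>
        show g ⟨r + 1, by omega⟩ = false
        refine h3 ⟨r, by omega⟩ ⟨r + 1, by omega⟩ rfl ?_
        rwa [cons2_two] at hi

lemma card_black_cons {n : ℕ} (a b : Bool) (g : Fin n → Bool) :
    blackc (Fin.cons a (Fin.cons b g) : Fin (n + 2) → Bool)
      = (cond a 1 0) + (cond b 1 0) + blackc g := by
  unfold blackc
  rw [Finset.card_filter, Finset.card_filter, Fin.sum_univ_succ, Fin.sum_univ_succ]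
  simp only [Fin.cons_zero, Fin.cons_succ]
  cases a <;> cases b <;> simp <;> omega

lemma card_even_cons {n : ℕ} (a b : Bool) (g : Fin n → Bool) :
    evenc (Fin.cons a (Fin.cons b g) : Fin (n + 2) → Bool)
      = (cond b 1 0) + evenc g := by
  unfold evenc
  rw [Finset.card_filter, Finset.card_filter, Fin.sum_univ_succ, Fin.sum_univ_succ]
  simp only [Fin.cons_zero, Fin.cons_succ, Fin.val_succ, Fin.val_zero]
  norm_num
  have hset : (univ.filter (fun x : Fin n => g x = true ∧ Even ((x : ℕ) + 1 + 1 + 1)))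
      = univ.filter (fun x : Fin n => g x = true ∧ Even ((x : ℕ) + 1)) := by
    apply Finset.filter_congr
    intro x _
    simp [Nat.even_add_one]
  rw [hset]
  cases b <;> simp
lemma ok_card_le {k : ℕ} (g : Fin (2 * k) → Bool) (hg : OkP g) : blackc g ≤ k := by
  have hle := Finset.card_le_card_of_injOn (f := fun i : Fin (2 * k) => (i : ℕ) / 2)
    (s := univ.filter fun i : Fin (2 * k) => g i = true) (t := Finset.range k)
    (by
      intro i _
      simp only [Finset.mem_coe, Finset.mem_range]
      have := i.2
      omega)
    (by
      intro i hi j hj hij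
      simp only [Finset.coe_filter, Set.mem_setOf_eq, Finset.mem_univ, true_and] at hi hj
      by_contra hne
      have hne' : (i : ℕ) ≠ (j : ℕ) := fun h => hne (Fin.ext h)
      simp only at hij
      rcases (by omega : (j : ℕ) = (i : ℕ) + 1 ∨ (i : ℕ) = (j : ℕ) + 1) with h | h
      · have := hg i j h hi
        rw [hj] at this
        exact absurd this (by simp)
      · have := hg j i h hj
        rw [hi] at this
        exact absurd this (by simp))
  simpa [blackc] using hle

lemma wt_cons (q t : ℤ) (k : ℕ) (a b : Bool) (g : Fin (2 * k) → Bool)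
    (hab : a = true → b = false) (hg : OkP g) :
    wt q t (2 * k + 2) (Fin.cons a (Fin.cons b g)) =
      (q ^ (cond b 1 0) * t ^ (1 - (cond a 1 0 + cond b 1 0))) * wt q t (2 * k) g := by
  have hc : blackc g ≤ k := ok_card_le g hg
  unfold wt
  rw [card_black_cons, card_even_cons]
  have h1 : (2 * k + 2) / 2 = k + 1 := by omega
  have h2 : (2 * k) / 2 = k := by omega
  rw [h1, h2]
  have h3 : (k + 1) - ((cond a 1 0) + (cond b 1 0) + blackc g)
      = (1 - ((cond a 1 0) + (cond b 1 0))) + (k - blackc g) := by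
    cases a <;> cases b <;> simp_all <;> omega
  rw [h3, pow_add, pow_add]
  ring

lemma sum_cons2 {n : ℕ} (F : (Fin (n + 2) → Bool) → ℤ) :
    ∑ f : Fin (n + 2) → Bool, F f
      = ∑ a : Bool, ∑ b : Bool, ∑ g : Fin n → Bool, F (Fin.cons a (Fin.cons b g)) := by
  let e : Bool × (Bool × (Fin n → Bool)) ≃ (Fin (n + 2) → Bool) :=
    (Equiv.prodCongr (Equiv.refl Bool) (Fin.consEquiv fun _ => Bool)).trans
      (Fin.consEquiv fun _ => Bool)
  rw [← Equiv.sum_comp e F, Fintype.sum_prod_type]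
  refine Finset.sum_congr rfl fun a _ => ?_
  rw [Fintype.sum_prod_type]
  rfl

lemma A_split (q t : ℤ) (n : ℕ) : A q t n = Tb q t n false + Tb q t n true := by
  unfold A Tb
  rw [← Finset.sum_filter_add_sum_filter_not
    ((univ : Finset (Fin n → Bool)).filter (fun f => OkP f)) (fun f => headB f = false),
    Finset.filter_filter, Finset.filter_filter]
  congr 1
  apply Finset.sum_congr _ (fun _ _ => rfl)
  apply Finset.filter_congr
  intro f _
  simp
lemma branch (q t : ℤ) (k : ℕ) (s a b : Bool) :
    (∑ g : Fin (2 * k) → Bool,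
        if OkP (Fin.cons a (Fin.cons b g) : Fin (2 * k + 2) → Bool)
            ∧ headB (Fin.cons a (Fin.cons b g) : Fin (2 * k + 2) → Bool) = s
        then wt q t (2 * k + 2) (Fin.cons a (Fin.cons b g)) else 0)
      = if a = s then
          (if a = true ∧ b = true then 0 else
            (q ^ (cond b 1 0) * t ^ (1 - (cond a 1 0 + cond b 1 0))) *
              (cond b (Tb q t (2 * k) false) (A q t (2 * k))))
        else 0 := by
  by_cases has : a = s
  · rw [if_pos has]
    by_cases hab : a = true ∧ b = true
    · rw [if_pos hab]
      apply Finset.sum_eq_zero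
      intro g _
      rw [if_neg]
      rintro ⟨hok, -⟩
      have h := ((ok_cons a b g).1 hok).1 hab.1
      rw [hab.2] at h
      simp at h
    · rw [if_neg hab]
      have hab' : a = true → b = false := by
        intro ha
        cases b
        · rfl
        · exact absurd ⟨ha, rfl⟩ hab
      have hcond : ∀ g : Fin (2 * k) → Bool,
          (OkP (Fin.cons a (Fin.cons b g) : Fin (2 * k + 2) → Bool)
              ∧ headB (Fin.cons a (Fin.cons b g) : Fin (2 * k + 2) → Bool) = s)
            ↔ (OkP g ∧ (b = true → headB g = false)) := by
        intro g
        rw [ok_cons, headB_cons2]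
        constructor
        · rintro ⟨⟨-, h2, h3⟩, -⟩
          exact ⟨h3, h2⟩
        · rintro ⟨h3, h2⟩
          exact ⟨⟨hab', h2, h3⟩, has⟩
      have hstep : ∀ g : Fin (2 * k) → Bool,
          (if OkP (Fin.cons a (Fin.cons b g) : Fin (2 * k + 2) → Bool)
              ∧ headB (Fin.cons a (Fin.cons b g) : Fin (2 * k + 2) → Bool) = s
           then wt q t (2 * k + 2) (Fin.cons a (Fin.cons b g)) else 0)
            = (q ^ (cond b 1 0) * t ^ (1 - (cond a 1 0 + cond b 1 0))) *
              (if OkP g ∧ (b = true → headB g = false) then wt q t (2 * k) g else 0) := by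
        intro g
        by_cases hC : OkP g ∧ (b = true → headB g = false)
        · rw [if_pos ((hcond g).2 hC), if_pos hC, wt_cons q t k a b g hab' hC.1]
        · rw [if_neg (fun h => hC ((hcond g).1 h)), if_neg hC, mul_zero]
      rw [Finset.sum_congr rfl (fun g _ => hstep g), ← Finset.mul_sum]
      congr 1
      cases b
      · show _ = A q t (2 * k)
        rw [A, Finset.sum_filter]
        apply Finset.sum_congr rfl
        intro g _
        simp
      · show _ = Tb q t (2 * k) false
        rw [Tb, Finset.sum_filter]
        apply Finset.sum_congr rfl
        intro g _
        simp
  · rw [if_neg has]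
    apply Finset.sum_eq_zero
    intro g _
    rw [if_neg]
    rintro ⟨-, hh⟩
    rw [headB_cons2] at hh
    exact has hh

lemma key (q t : ℤ) (k : ℕ) (s : Bool) :
    Tb q t (2 * k + 2) s
      = (cond s 1 t) * A q t (2 * k) + (cond s 0 q) * Tb q t (2 * k) false := by
  rw [Tb, Finset.sum_filter,
    sum_cons2 (n := 2 * k) (fun f => if OkP f ∧ headB f = s then wt q t (2 * k + 2) f else 0)]
  rw [Fintype.sum_bool, Fintype.sum_bool, Fintype.sum_bool]
  rw [branch q t k s true true, branch q t k s true false,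
    branch q t k s false true, branch q t k s false false]
  cases s <;> simp <;> ring
lemma chainSum_eq_A (q t : ℤ) (k : ℕ) : chainSum q t k = A q t (2 * k) := by
  unfold chainSum A wt evenc blackc
  simp only [show (2 * k) / 2 = k from by omega]
  apply Finset.sum_congr _ (fun _ _ => rfl)
  apply Finset.filter_congr
  intro f _
  exact Iff.rfl

end ChainAux

/-- The weighted count of black/white chains of length `2m+4` with no two
consecutive black beads equals `(1+q+t)` times the count for length `2m+2`
minus `q` times the count for length `2m`. -/
theorem chainSum_recurrence (q t : ℤ) (m : ℕ) :
    chainSum q t (m + 2) = (1 + q + t) * chainSum q t (m + 1) - q * chainSum q t m := by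
  open ChainAux in
  have e2 : chainSum q t (m + 2) = A q t (2 * (m + 1) + 2) := by
    rw [ChainAux.chainSum_eq_A, show 2 * (m + 2) = 2 * (m + 1) + 2 by ring]
  have e1 : chainSum q t (m + 1) = A q t (2 * m + 2) := by
    rw [ChainAux.chainSum_eq_A, show 2 * (m + 1) = 2 * m + 2 by ring]
  have e0 : chainSum q t m = A q t (2 * m) := ChainAux.chainSum_eq_A q t m
  have hTtrue : ChainAux.Tb q t (2 * m + 2) true = A q t (2 * m) := by
    have h := ChainAux.key q t m true
    simpa using h
  have hT : ChainAux.Tb q t (2 * m + 2) false = A q t (2 * m + 2) - A q t (2 * m) := by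
    have h1 := ChainAux.A_split q t (2 * m + 2)
    rw [hTtrue] at h1
    linarith
  have k1 : A q t (2 * (m + 1) + 2)
      = (1 + t) * A q t (2 * (m + 1)) + q * ChainAux.Tb q t (2 * (m + 1)) false := by
    rw [ChainAux.A_split q t (2 * (m + 1) + 2), ChainAux.key q t (m + 1) false,
      ChainAux.key q t (m + 1) true]
    simp
    ring
  rw [e2, e1, e0, k1, show 2 * (m + 1) = 2 * m + 2 by ring, hT]
  ring
end

section
/- Let L₀ be the k×k reduced Laplacian of the (q,t)-wheel graph, i.e., the circulant matrix circ(1+q+t, −q, 0, ..., 0, −1) for k ≥ 3 (with appropriate degenerate versions for k = 1, 2). Then det L₀ equals the weighted spanning-tree polynomial 𝒲_k(q,t) = Σ over spanning trees T of the wheel graph W_k of q^(dist(T))·t^(#spokes(T)). -/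
/-- The `k×k` reduced Laplacian of the `(q,t)`-wheel graph: the circulant matrix
`circ(1+q+t, −q, 0, …, 0, −1)`, with `−q` one step clockwise and `−1` one step
counterclockwise of the diagonal (with wraparound). -/
def wheelLap (q t : ℤ) (k : ℕ) [NeZero k] : Matrix (ZMod k) (ZMod k) ℤ :=
  Matrix.of fun i j =>
    if j = i then 1 + q + t else if j = i + 1 then -q else if j = i - 1 then -1 else 0

/-- The weighted spanning-tree polynomial `𝒲_k(q,t)` of the wheel graph `W_k`.
A spanning tree is encoded by a function `f : ZMod k → Fin 3` telling how each
rim vertex starts its path to the hub: `0` = via its spoke, `1` = via the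
clockwise rim edge to `v+1`, `2` = via the counterclockwise rim edge to `v−1`.
The conditions (some spoke exists, and no two adjacent vertices point at each
other) characterize exactly the spanning trees: disjoint rim arcs, each attached
to the hub by one spoke.  The weight is `q^(dist T) · t^(#spokes T)`, where
`dist T` is the number of rim edges traversed clockwise (those lying on the
clockwise side of the spoke of their arc) and `#spokes T` the number of spokes. -/
def wheelTreeSum (q t : ℤ) (k : ℕ) [NeZero k] : ℤ :=
  ∑ f ∈ (Finset.univ : Finset (ZMod k → Fin 3)).filter
      (fun f => (∃ v, f v = 0) ∧ ∀ v, ¬(f v = 1 ∧ f (v + 1) = 2)),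
    q ^ (Finset.univ.filter (fun v => f v = 1)).card *
      t ^ (Finset.univ.filter (fun v => f v = 0)).card

open Finset Matrix

noncomputable section
variable (q t : ℤ)


lemma zmod_shift_eq {k : ℕ} (σ : Equiv.Perm (ZMod k)) [NeZero k] (h1 : (1 : ZMod k) ≠ 0)
    (h : ∀ i, σ i = i ∨ σ i = i - 1) (i₀ : ZMod k) (h₀ : σ i₀ = i₀ - 1) :
    ∀ i, σ i = i - 1 := by
  have key : ∀ n : ℕ, σ (i₀ - n) = (i₀ - n) - 1 := by
    intro n
    induction n with
    | zero => simpa using h₀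
    | succ n ih =>
      have hj : σ (i₀ - n - 1) = i₀ - n - 1 - 1 := by
        rcases h (i₀ - n - 1) with hc | hc
        · exfalso
          have h3 : σ (i₀ - n - 1) = σ (i₀ - n) := by rw [hc, ih]
          have h4 := σ.injective h3
          apply h1
          calc (1 : ZMod k) = -((i₀ - ↑n - 1) - (i₀ - ↑n)) := by ring
            _ = 0 := by rw [h4]; ring
        · exact hc
      have he : i₀ - (n+1 : ℕ) = i₀ - n - 1 := by push_cast; ring
      rw [he]; exact hj
  intro i
  have : i₀ - ((i₀ - i).val : ZMod k) = i := by
    rw [ZMod.natCast_rightInverse (i₀ - i)]; ring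
  rw [← this]; exact key _

lemma zmod_perm_class {k : ℕ} (σ : Equiv.Perm (ZMod k)) [NeZero k] (h1 : (1 : ZMod k) ≠ 0)
    (h : ∀ i, σ i = i ∨ σ i = i - 1) :
    σ = 1 ∨ σ = Equiv.subRight (1 : ZMod k) := by
  by_cases hall : ∀ i, σ i = i
  · left; exact Equiv.ext hall
  · right
    push_neg at hall
    obtain ⟨i₀, hi₀⟩ := hall
    exact Equiv.ext (zmod_shift_eq σ h1 h i₀ ((h i₀).resolve_left hi₀))

lemma sign_subRight_one (n : ℕ) :
    Equiv.Perm.sign (Equiv.subRight (1 : ZMod (n+1))) = (-1) ^ n := by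
  have h2 : Equiv.subRight (1 : Fin (n+1)) = (finRotate (n+1)).symm := by
    apply Equiv.ext
    intro i
    rw [Equiv.eq_symm_apply, Equiv.subRight_apply]
    exact (finRotate_succ_apply (i - 1)).trans (sub_add_cancel i 1)
  show Equiv.Perm.sign (Equiv.subRight (1 : Fin (n+1))) = _
  rw [h2, Equiv.Perm.sign_symm]
  simpa using sign_finRotate (n+1)

/-- determinant of the two-diagonal circulant: diag `a`, entry `b` at `j = i+1`. -/
lemma det_twoDiag {k : ℕ} [NeZero k] (hk : 3 ≤ k) (a b : ℂ) :
    (Matrix.of fun i j : ZMod k => if j = i then a else if j = i + 1 then b else 0).det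
      = a ^ k - (-1) ^ k * b ^ k := by
  have h1 : (1 : ZMod k) ≠ 0 := by
    haveI : Fact (1 < k) := ⟨by omega⟩
    exact one_ne_zero
  set M := (Matrix.of fun i j : ZMod k => if j = i then a else if j = i + 1 then b else 0) with hM
  set τ := Equiv.subRight (1 : ZMod k) with hτ
  have hτ1 : (1 : Equiv.Perm (ZMod k)) ≠ τ := by
    intro hcon
    have h0 := DFunLike.congr_fun hcon (0 : ZMod k)
    rw [Equiv.Perm.coe_one, id_eq, hτ, Equiv.subRight_apply, zero_sub] at h0
    exact h1 (neg_eq_zero.mp h0.symm)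
  rw [Matrix.det_apply]
  rw [← Finset.sum_subset (Finset.subset_univ ({1, τ} : Finset (Equiv.Perm (ZMod k))))]
  · rw [Finset.sum_pair hτ1]
    have hτe : ∀ i : ZMod k, M (τ i) i = b := by
      intro i
      have hne : ¬ (i = i - 1) := by
        intro hcon; apply h1
        calc (1 : ZMod k) = i - (i - 1) := by ring
          _ = 0 := by rw [← hcon]; ring
      have heq : i = (i - 1) + 1 := by ring
      simp only [hM, hτ, Equiv.subRight_apply, Matrix.of_apply]
      rw [if_neg hne, if_pos heq]
    obtain ⟨n, rfl⟩ : ∃ n, k = n + 1 := ⟨k - 1, by omega⟩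
    have t1 : ∏ i : ZMod (n+1), M ((1 : Equiv.Perm (ZMod (n+1))) i) i = a ^ (n+1) := by
      have h : ∀ i : ZMod (n+1), M ((1 : Equiv.Perm (ZMod (n+1))) i) i = a := fun i => by
        simp [hM]
      rw [Finset.prod_congr rfl fun i _ => h i, Finset.prod_const, Finset.card_univ, ZMod.card]
    have t2 : ∏ i : ZMod (n+1), M (τ i) i = b ^ (n+1) := by
      rw [Finset.prod_congr rfl fun i _ => hτe i, Finset.prod_const, Finset.card_univ, ZMod.card]
    rw [t1, t2, Equiv.Perm.sign_one, one_smul, hτ, sign_subRight_one, Units.smul_def]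
    have hc : (((-1 : ℤˣ) ^ n : ℤˣ) : ℤ) = (-1 : ℤ)^n := by push_cast; ring
    rw [hc, zsmul_eq_mul]
    push_cast
    ring
  · intro σ _ hσ
    have hno : ¬ (∀ i, σ i = i ∨ σ i = i - 1) := by
      intro hall
      rcases zmod_perm_class σ h1 hall with rfl | rfl <;> simp [hτ] at hσ
    push_neg at hno
    obtain ⟨i, hi1, hi2⟩ := hno
    have hzero : M (σ i) i = 0 := by
      have c1 : ¬ (i = σ i) := fun hcon => hi1 (hcon.symm)
      have c2 : ¬ (i = σ i + 1) := fun hcon => hi2 (eq_sub_of_add_eq hcon.symm)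
      simp [hM, c1, c2]
    have hp : ∏ x : ZMod k, M (σ x) x = 0 := Finset.prod_eq_zero (Finset.mem_univ i) hzero
    rw [hp, smul_zero]

lemma zmod_two_ne_zero {k : ℕ} [NeZero k] (hk : 3 ≤ k) : (2 : ZMod k) ≠ 0 := by
  intro hcon
  have : ((2 : ℕ) : ZMod k) = 0 := by push_cast; exact hcon
  rw [ZMod.natCast_eq_zero_iff] at this
  have := Nat.le_of_dvd (by norm_num) this
  omega

lemma zmod_one_ne_zero' {k : ℕ} [NeZero k] (hk : 3 ≤ k) : (1 : ZMod k) ≠ 0 := by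
  haveI : Fact (1 < k) := ⟨by omega⟩
  exact one_ne_zero

lemma wheelLap_factor {k : ℕ} [NeZero k] (hk : 3 ≤ k) (q t : ℤ) (α β : ℂ)
    (hsum : α + β = 1 + (q:ℂ) + t) (hprod : α * β = (q:ℂ)) :
    (wheelLap q t k).map (Int.cast : ℤ → ℂ) =
      (Matrix.of fun i j : ZMod k => if j = i then (-1 : ℂ) else if j = i + 1 then α else 0) *
      (Matrix.of fun i j : ZMod k => if j = i then -β else if j = i - 1 then (1:ℂ) else 0) := by
  have h1 : (1 : ZMod k) ≠ 0 := zmod_one_ne_zero' hk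
  have h2 : (2 : ZMod k) ≠ 0 := zmod_two_ne_zero hk
  ext i j
  rw [Matrix.mul_apply]
  set Y := (Matrix.of fun i j : ZMod k => if j = i then -β else if j = i - 1 then (1:ℂ) else 0)
    with hY
  have hsplit : ∀ m : ZMod k,
      (Matrix.of fun i j : ZMod k => if j = i then (-1 : ℂ) else if j = i + 1 then α else 0) i m
        * Y m j
      = (if m = i then -Y i j else 0) + (if m = i + 1 then α * Y (i+1) j else 0) := by
    intro m
    by_cases hmi : m = i
    · have : ¬ (m = i + 1) := by
        rw [hmi]; intro hcon
        exact h1 (by linear_combination -hcon)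
      subst hmi
      simp [this]
    · by_cases hmi1 : m = i + 1
      · subst hmi1; simp [hmi, Matrix.of_apply]
      · simp [Matrix.of_apply, hmi, hmi1]
  rw [Finset.sum_congr rfl fun m _ => hsplit m, Finset.sum_add_distrib,
    Finset.sum_ite_eq' Finset.univ i, Finset.sum_ite_eq' Finset.univ (i+1)]
  simp only [Finset.mem_univ, if_true]
  have hii1 : ¬ ((i : ZMod k) = i + 1) := fun hcon => h1 (by linear_combination -hcon)
  have hi1i : ¬ ((i + 1 : ZMod k) = i) := fun hcon => h1 (by linear_combination hcon)
  have hsub : (i + 1 : ZMod k) - 1 = i := by ring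
  by_cases hji : j = i
  · subst hji
    have hjm : ¬ ((j : ZMod k) = j - 1) := by
      intro hcon; exact h1 (by linear_combination hcon)
    simp only [wheelLap, Matrix.map_apply, Matrix.of_apply, hY, if_pos rfl, hsub,
      if_neg hii1, if_neg hjm]
    push_cast
    linear_combination -hsum
  · by_cases hji1 : j = i + 1
    · subst hji1
      have hc1 : ¬ ((i + 1 : ZMod k) = i - 1) := by
        intro hcon; exact h2 (by linear_combination hcon)
      simp only [wheelLap, Matrix.map_apply, Matrix.of_apply, hY, hsub,
        if_neg hji, if_pos rfl, if_neg hi1i, if_neg hc1]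
      push_cast
      linear_combination hprod
    · by_cases hjim : j = i - 1
      · subst hjim
        have hc2 : ¬ ((i - 1 : ZMod k) = i + 1) := by
          intro hcon; exact h2 (by linear_combination -hcon)
        simp only [wheelLap, Matrix.map_apply, Matrix.of_apply, hY, hsub,
          if_neg hji, if_neg hc2, if_pos rfl]
        push_cast
        ring
      · simp only [wheelLap, Matrix.map_apply, Matrix.of_apply, hY, hsub,
          if_neg hji, if_neg hji1, if_neg hjim]
        push_cast
        ring

lemma det_wheelLap_complex {k : ℕ} [NeZero k] (hk : 3 ≤ k) (q t : ℤ) (α β : ℂ)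
    (hsum : α + β = 1 + (q:ℂ) + t) (hprod : α * β = (q:ℂ)) :
    ((wheelLap q t k).map (Int.cast : ℤ → ℂ)).det = α^k + β^k - (q:ℂ)^k - 1 := by
  rw [wheelLap_factor hk q t α β hsum hprod, Matrix.det_mul]
  have hT : (Matrix.of fun i j : ZMod k => if j = i then -β else if j = i - 1 then (1:ℂ) else 0)
      = (Matrix.of fun i j : ZMod k => if j = i then -β else if j = i + 1 then (1:ℂ) else 0)ᵀ := by
    ext i j
    simp only [Matrix.transpose_apply, Matrix.of_apply]
    have e1 : (j = i) ↔ (i = j) := eq_comm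
    have e2 : (j = i - 1) ↔ (i = j + 1) := by
      constructor
      · intro h; rw [h]; ring
      · intro h; rw [h]; ring
    rw [if_congr e1 rfl rfl, if_congr e2 rfl rfl]
  rw [hT, Matrix.det_transpose, det_twoDiag hk, det_twoDiag hk]
  have hsq : ((-1:ℂ)^k) * ((-1:ℂ)^k) = 1 := by
    rw [← pow_add, ← two_mul, pow_mul]; norm_num
  calc ((-1:ℂ)^k - (-1:ℂ)^k * α^k) * ((-β)^k - (-1:ℂ)^k * 1^k)
      = ((-1:ℂ)^k * ((-1:ℂ)^k)) * ((1 - α^k) * (β^k - 1)) := by rw [neg_pow]; ring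
    _ = (1 - α^k) * (β^k - 1) := by rw [hsq, one_mul]
    _ = α^k + β^k - (α*β)^k - 1 := by rw [mul_pow]; ring
    _ = α^k + β^k - (q:ℂ)^k - 1 := by rw [hprod]


/-- weight of a state: 0 ↦ t (spoke), 1 ↦ q (cw rim), 2 ↦ 1 (ccw rim) -/
def wtc (q t : ℤ) : Fin 3 → ℂ := ![(t:ℂ), (q:ℂ), 1]

/-- transfer matrix -/
def Tm (q t : ℤ) : Matrix (Fin 3) (Fin 3) ℂ :=
  Matrix.of fun a b => if a = 1 ∧ b = 2 then 0 else wtc q t a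

lemma Tm_cubic :
    Tm q t ^ 3 = ((1 + q + t : ℂ)) • Tm q t ^ 2 - (q : ℂ) • Tm q t := by
  ext i j
  fin_cases i <;> fin_cases j <;>
    simp [pow_succ, Matrix.mul_apply, Fin.sum_univ_three, Tm, wtc, Matrix.smul_apply,
      Matrix.sub_apply] <;> ring

lemma trace_Tm : (Tm q t).trace = (1 + q + t : ℂ) := by
  simp [Matrix.trace, Fin.sum_univ_three, Tm, wtc, Matrix.diag]
  ring

lemma trace_Tm_sq : (Tm q t ^ 2).trace = (1 + q + t : ℂ)^2 - 2 * q := by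
  simp [Matrix.trace, pow_two, Matrix.mul_apply, Fin.sum_univ_three, Tm, wtc, Matrix.diag]
  ring

lemma trace_Tm_pow (α β : ℂ) (hsum : α + β = 1 + (q:ℂ) + t) (hprod : α * β = (q:ℂ)) :
    ∀ n : ℕ, (Tm q t ^ (n+1)).trace = α^(n+1) + β^(n+1) := by
  have hα : α^2 = (1 + (q:ℂ) + t) * α - q := by
    have : β = (1 + (q:ℂ) + t) - α := by linear_combination hsum
    rw [this] at hprod
    linear_combination -hprod
  have hβ : β^2 = (1 + (q:ℂ) + t) * β - q := by
    have : α = (1 + (q:ℂ) + t) - β := by linear_combination hsum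
    rw [this] at hprod
    linear_combination -hprod
  intro n
  induction n using Nat.strong_induction_on with
  | _ n ih =>
    match n with
    | 0 => rw [pow_one, trace_Tm, ← hsum]; ring
    | 1 =>
      rw [show (1:ℕ)+1 = 2 from rfl, trace_Tm_sq]
      linear_combination -hα - hβ - (1+(q:ℂ)+t)*hsum
    | (m+2) =>
      have hrec : Tm q t ^ (m+3) = ((1 + q + t : ℂ)) • Tm q t ^ (m+2) - (q : ℂ) • Tm q t ^ (m+1) := by
        have h1 : Tm q t ^ (m+3) = Tm q t ^ m * Tm q t ^ 3 := by rw [← pow_add]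
        have h2 : Tm q t ^ (m+2) = Tm q t ^ m * Tm q t ^ 2 := by rw [← pow_add]
        have h3 : Tm q t ^ (m+1) = Tm q t ^ m * Tm q t ^ 1 := by rw [← pow_add]
        rw [h1, h2, h3, Tm_cubic, Matrix.mul_sub, mul_smul_comm, mul_smul_comm, pow_one]
      rw [hrec, Matrix.trace_sub, Matrix.trace_smul, Matrix.trace_smul,
        ih (m+1) (by omega), ih m (by omega)]
      have e1 : α^(m+3) = (1 + (q:ℂ) + t) * α^(m+2) - q * α^(m+1) := by
        have : α^(m+3) = α^(m+1) * α^2 := by ring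
        rw [this, hα]; ring
      have e2 : β^(m+3) = (1 + (q:ℂ) + t) * β^(m+2) - q * β^(m+1) := by
        have : β^(m+3) = β^(m+1) * β^2 := by ring
        rw [this, hβ]; ring
      rw [e1, e2]
      simp [smul_eq_mul]
      ring


lemma pow_apply_walk (T : Matrix (Fin 3) (Fin 3) ℂ) (n : ℕ) (a b : Fin 3) :
    (T ^ n) a b = ∑ g : Fin (n+1) → Fin 3,
      if g 0 = a ∧ g (Fin.last n) = b then ∏ i : Fin n, T (g i.castSucc) (g i.succ) else 0 := by
  induction n generalizing a b with
  | zero =>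
    rw [pow_zero]
    have h := Fintype.sum_equiv (Equiv.funUnique (Fin 1) (Fin 3))
      (fun g : Fin 1 → Fin 3 => if g 0 = a ∧ g (Fin.last 0) = b
        then ∏ i : Fin 0, T (g i.castSucc) (g i.succ) else 0)
      (fun c : Fin 3 => if c = a ∧ c = b then (1:ℂ) else 0)
      (fun g => by
        simp only [Equiv.funUnique_apply, Fin.default_eq_zero,
          show Fin.last 0 = 0 from rfl, Fin.prod_univ_zero])
    rw [h]
    have hpt : ∀ c : Fin 3, (if c = a ∧ c = b then (1:ℂ) else 0)
        = if c = a then (if a = b then (1:ℂ) else 0) else 0 := by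
      intro c
      by_cases h1 : c = a
      · subst h1
        by_cases h2 : c = b <;> simp [h2]
      · simp [h1]
    rw [Finset.sum_congr rfl fun c _ => hpt c, Finset.sum_ite_eq' Finset.univ a]
    simp [Matrix.one_apply]
  | succ n ih =>
    rw [pow_succ']
    rw [Matrix.mul_apply]
    have lhs_eq : ∀ c : Fin 3, T a c * (T ^ n) c b
        = ∑ g : Fin (n+1) → Fin 3, if g 0 = c then
            (if g (Fin.last n) = b then T a c * ∏ i : Fin n, T (g i.castSucc) (g i.succ) else 0)
          else 0 := by
      intro c
      rw [ih, Finset.mul_sum]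
      refine Finset.sum_congr rfl fun g _ => ?_
      by_cases h1 : g 0 = c <;> by_cases h2 : g (Fin.last n) = b <;> simp [h1, h2]
    rw [Finset.sum_congr rfl fun c _ => lhs_eq c, Finset.sum_comm]
    have lhs2 : ∀ g : Fin (n+1) → Fin 3,
        (∑ c : Fin 3, if g 0 = c then
            (if g (Fin.last n) = b then T a c * ∏ i : Fin n, T (g i.castSucc) (g i.succ) else 0)
          else 0)
        = (if g (Fin.last n) = b then T a (g 0) * ∏ i : Fin n, T (g i.castSucc) (g i.succ)
            else 0) := by
      intro g
      rw [Finset.sum_ite_eq Finset.univ (g 0)]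
      simp
    rw [Finset.sum_congr rfl fun g _ => lhs2 g]
    rw [← ((Fin.consEquiv (fun _ : Fin (n+2) => Fin 3)).sum_comp
      (fun g : Fin (n+2) → Fin 3 => if g 0 = a ∧ g (Fin.last (n+1)) = b
        then ∏ i : Fin (n+1), T (g i.castSucc) (g i.succ) else 0))]
    rw [Fintype.sum_prod_type]
    simp only [Fin.consEquiv_apply]
    have rhs_eq : ∀ (c : Fin 3) (g : Fin (n+1) → Fin 3),
        (if (Fin.cons c g : ∀ _ : Fin (n+2), Fin 3) 0 = a
             ∧ (Fin.cons c g : ∀ _ : Fin (n+2), Fin 3) (Fin.last (n+1)) = b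
          then ∏ i : Fin (n+1), T ((Fin.cons c g : ∀ _ : Fin (n+2), Fin 3) i.castSucc)
            ((Fin.cons c g : ∀ _ : Fin (n+2), Fin 3) i.succ) else 0)
        = if c = a then
            (if g (Fin.last n) = b then T a (g 0) * ∏ i : Fin n, T (g i.castSucc) (g i.succ)
              else 0)
          else 0 := by
      intro c g
      have hzero : (Fin.cons c g : ∀ _ : Fin (n+2), Fin 3) 0 = c := rfl
      have hlast : (Fin.cons c g : ∀ _ : Fin (n+2), Fin 3) (Fin.last (n+1)) = g (Fin.last n) := by
        rw [← Fin.succ_last, Fin.cons_succ]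
      have hprod : (∏ i : Fin (n+1), T ((Fin.cons c g : ∀ _ : Fin (n+2), Fin 3) i.castSucc)
            ((Fin.cons c g : ∀ _ : Fin (n+2), Fin 3) i.succ))
          = T c (g 0) * ∏ i : Fin n, T (g i.castSucc) (g i.succ) := by
        rw [Fin.prod_univ_succ]
        congr 1
      rw [hzero, hlast, hprod]
      by_cases h1 : c = a
      · subst h1
        by_cases h2 : g (Fin.last n) = b <;> simp [h2]
      · simp [h1]
    rw [Finset.sum_congr rfl fun c _ => Finset.sum_congr rfl fun g _ => rhs_eq c g]
    have hpull : ∀ c : Fin 3, (∑ g : Fin (n+1) → Fin 3, if c = a then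
          (if g (Fin.last n) = b then T a (g 0) * ∏ i : Fin n, T (g i.castSucc) (g i.succ)
            else 0) else 0)
        = if c = a then (∑ g : Fin (n+1) → Fin 3,
            if g (Fin.last n) = b then T a (g 0) * ∏ i : Fin n, T (g i.castSucc) (g i.succ)
              else 0) else 0 := by
      intro c
      split_ifs <;> simp
    rw [Finset.sum_congr rfl fun c _ => hpull c, Finset.sum_ite_eq' Finset.univ a]
    simp

lemma trace_pow_cyclic (T : Matrix (Fin 3) (Fin 3) ℂ) (k : ℕ) [NeZero k] :
    (T ^ k).trace = ∑ f : ZMod k → Fin 3, ∏ v : ZMod k, T (f v) (f (v+1)) := by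
  rw [Matrix.trace]
  have hdiag : ∀ a : Fin 3, (T ^ k).diag a = (T ^ k) a a := fun a => rfl
  rw [Finset.sum_congr rfl fun a _ => (hdiag a).trans (pow_apply_walk T k a a)]
  rw [Finset.sum_comm]
  have h1 : ∀ g : Fin (k+1) → Fin 3,
      (∑ a : Fin 3, if g 0 = a ∧ g (Fin.last k) = a
        then ∏ i : Fin k, T (g i.castSucc) (g i.succ) else 0)
      = if g (Fin.last k) = g 0 then ∏ i : Fin k, T (g i.castSucc) (g i.succ) else 0 := by
    intro g
    have hpt : ∀ a : Fin 3, (if g 0 = a ∧ g (Fin.last k) = a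
          then ∏ i : Fin k, T (g i.castSucc) (g i.succ) else 0)
        = if g 0 = a then (if g (Fin.last k) = g 0 then ∏ i : Fin k, T (g i.castSucc) (g i.succ)
            else 0) else 0 := by
      intro a
      by_cases ha : g 0 = a
      · rw [← ha]
        by_cases hb : g (Fin.last k) = g 0 <;> simp [hb]
      · simp [ha]
    rw [Finset.sum_congr rfl fun a _ => hpt a, Finset.sum_ite_eq Finset.univ (g 0)]
    simp
  rw [Finset.sum_congr rfl fun g _ => h1 g]
  rw [← Finset.sum_filter]
  refine Finset.sum_nbij'
    (fun g => (fun v : ZMod k => g ⟨v.val, by have := ZMod.val_lt v; omega⟩))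
    (fun f => (fun i : Fin (k+1) => f ((i.val : ℕ) : ZMod k)))
    (fun g _ => Finset.mem_univ _)
    ?_ ?_ ?_ ?_
  · intro f _
    simp only [Finset.mem_filter, Finset.mem_univ, true_and]
    rw [Fin.val_last, Fin.val_zero, ZMod.natCast_self, Nat.cast_zero]
  · -- left inverse (walks → f → walks)
    intro g hg
    simp only [Finset.mem_filter, Finset.mem_univ, true_and] at hg
    funext i
    by_cases hi : i.val < k
    · simp only [ZMod.val_cast_of_lt hi]
    · have hik : i.val = k := by have := i.isLt; omega
      have hlast : i = Fin.last k := Fin.ext (by simp [hik])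
      subst hlast
      simp only [Fin.val_last, ZMod.natCast_self, ZMod.val_zero]
      exact hg.symm ▸ (by congr)
  · -- right inverse
    intro f _
    funext v
    show f (((v.val : ℕ) : ZMod k)) = f v
    congr 1
    exact ZMod.natCast_rightInverse v
  · -- weights agree
    intro g hg
    simp only [Finset.mem_filter, Finset.mem_univ, true_and] at hg
    have hbij : Function.Bijective (fun i : Fin k => ((i.val : ℕ) : ZMod k)) := by
      rw [Fintype.bijective_iff_injective_and_card]
      refine ⟨?_, by simp [ZMod.card]⟩
      intro i j hij
      have hij2 : ((i.val : ℕ) : ZMod k) = ((j.val : ℕ) : ZMod k) := hij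
      apply Fin.ext
      have h5 := congrArg ZMod.val hij2
      rwa [ZMod.val_cast_of_lt i.isLt, ZMod.val_cast_of_lt j.isLt] at h5
    refine Fintype.prod_bijective _ hbij _ _ fun i => ?_
    congr 1
    · congr 1
      apply Fin.ext
      simp [ZMod.val_cast_of_lt i.isLt]
    · by_cases hi : i.val + 1 < k
      · have h2 : ((((i.val : ℕ) : ZMod k)) + 1).val = i.val + 1 := by
          have h6 : (((i.val : ℕ) : ZMod k)) + 1 = (((i.val + 1 : ℕ)) : ZMod k) := by push_cast; ring
          rw [h6, ZMod.val_cast_of_lt hi]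
        congr 1
        apply Fin.ext
        simp [h2, Fin.val_succ]
      · have hik : i.val + 1 = k := by have := i.isLt; omega
        have h3 : (((i.val : ℕ) : ZMod k)) + 1 = 0 := by
          have h6 : (((i.val : ℕ) : ZMod k)) + 1 = (((i.val + 1 : ℕ)) : ZMod k) := by push_cast; ring
          rw [h6, hik, ZMod.natCast_self]
        have h4 : i.succ = Fin.last k := Fin.ext (by simp [Fin.val_succ, hik])
        rw [h4, hg, h3]
        congr 1
        apply Fin.ext
        simp [ZMod.val_zero]

lemma fin3_cases (x : Fin 3) : x = 0 ∨ x = 1 ∨ x = 2 := by omega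

lemma prod_wtc {k : ℕ} [NeZero k] (q t : ℤ) (f : ZMod k → Fin 3) :
    ∏ v : ZMod k, wtc q t (f v)
      = (q:ℂ) ^ (Finset.univ.filter (fun v => f v = 1)).card
        * (t:ℂ) ^ (Finset.univ.filter (fun v => f v = 0)).card := by
  rw [← Finset.prod_filter_mul_prod_filter_not Finset.univ (fun v => f v = 0)]
  have h0 : ∏ v ∈ Finset.univ.filter (fun v => f v = 0), wtc q t (f v)
      = (t:ℂ) ^ (Finset.univ.filter (fun v => f v = 0)).card := by
    rw [Finset.prod_congr rfl (fun v hv => ?_), Finset.prod_const]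
    rw [Finset.mem_filter] at hv
    rw [hv.2]
    simp [wtc]
  rw [h0]
  rw [← Finset.prod_filter_mul_prod_filter_not
    (Finset.univ.filter (fun v => ¬ f v = 0)) (fun v => f v = 1)]
  have h1 : ∏ v ∈ (Finset.univ.filter (fun v => ¬ f v = 0)).filter (fun v => f v = 1),
        wtc q t (f v)
      = (q:ℂ) ^ (Finset.univ.filter (fun v => f v = 1)).card := by
    have hset : (Finset.univ.filter (fun v => ¬ f v = 0)).filter (fun v => f v = 1)
        = Finset.univ.filter (fun v => f v = 1) := by
      rw [Finset.filter_filter]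
      apply Finset.filter_congr
      intro v _
      constructor
      · exact fun h => h.2
      · intro h
        exact ⟨by rw [h]; decide, h⟩
    rw [hset, Finset.prod_congr rfl (fun v hv => ?_), Finset.prod_const]
    rw [Finset.mem_filter] at hv
    rw [hv.2]
    simp [wtc]
  have h2 : ∏ v ∈ (Finset.univ.filter (fun v => ¬ f v = 0)).filter (fun v => ¬ f v = 1),
        wtc q t (f v) = 1 := by
    apply Finset.prod_eq_one
    intro v hv
    simp only [Finset.mem_filter] at hv
    have := fin3_cases (f v)
    have h2v : f v = 2 := by tauto
    rw [h2v]
    simp [wtc]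
  rw [h1, h2]
  ring

lemma sum_prod_Tm {k : ℕ} [NeZero k] (q t : ℤ) :
    ∑ f : ZMod k → Fin 3, ∏ v : ZMod k, Tm q t (f v) (f (v+1))
      = ∑ f ∈ Finset.univ.filter
          (fun f : ZMod k → Fin 3 => ∀ v, ¬(f v = 1 ∧ f (v+1) = 2)),
        (q:ℂ) ^ (Finset.univ.filter (fun v => f v = 1)).card
          * (t:ℂ) ^ (Finset.univ.filter (fun v => f v = 0)).card := by
  rw [← Finset.sum_filter_add_sum_filter_not Finset.univ
    (fun f : ZMod k → Fin 3 => ∀ v, ¬(f v = 1 ∧ f (v+1) = 2))]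
  have hzero : ∑ f ∈ Finset.univ.filter
      (fun f : ZMod k → Fin 3 => ¬ ∀ v, ¬(f v = 1 ∧ f (v+1) = 2)),
      ∏ v : ZMod k, Tm q t (f v) (f (v+1)) = 0 := by
    apply Finset.sum_eq_zero
    intro f hf
    simp only [Finset.mem_filter, Finset.mem_univ, true_and] at hf
    push_neg at hf
    obtain ⟨v, hv1, hv2⟩ := hf
    apply Finset.prod_eq_zero (Finset.mem_univ v)
    rw [hv1, hv2]
    simp [Tm]
  rw [hzero, add_zero]
  apply Finset.sum_congr rfl
  intro f hf
  simp only [Finset.mem_filter, Finset.mem_univ, true_and] at hf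
  rw [← prod_wtc q t f]
  apply Finset.prod_congr rfl
  intro v _
  have := hf v
  simp only [Tm, Matrix.of_apply, if_neg this]

lemma fin3_cases' (x : Fin 3) : x = 0 ∨ x = 1 ∨ x = 2 := by omega

lemma const_of_noZero_noBad {k : ℕ} [NeZero k] (f : ZMod k → Fin 3)
    (hQ : ∀ v, ¬(f v = 1 ∧ f (v + 1) = 2)) (hnP : ∀ v, f v ≠ 0) :
    f = (fun _ => 1) ∨ f = (fun _ => 2) := by
  by_cases hex : ∃ v, f v = 1
  · left
    obtain ⟨v₀, hv₀⟩ := hex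
    have key : ∀ n : ℕ, f (v₀ + n) = 1 := by
      intro n
      induction n with
      | zero => simpa using hv₀
      | succ n ih =>
        have h2 : f ((v₀ + n) + 1) ≠ 2 := fun hcon => hQ (v₀ + n) ⟨ih, hcon⟩
        have h0 : f ((v₀ + n) + 1) ≠ 0 := hnP _
        have heq : v₀ + ((n:ℕ)+1 : ℕ) = (v₀ + n) + 1 := by push_cast; ring
        rw [heq]
        rcases fin3_cases' (f ((v₀ + n) + 1)) with h | h | h
        · exact absurd h h0
        · exact h
        · exact absurd h h2
    funext u
    have : v₀ + (((u - v₀).val : ℕ) : ZMod k) = u := by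
      rw [ZMod.natCast_rightInverse (u - v₀)]; ring
    rw [← this]
    exact key _
  · right
    push_neg at hex
    funext u
    rcases fin3_cases' (f u) with h | h | h
    · exact absurd h (hnP u)
    · exact absurd h (hex u)
    · exact h

lemma treeSum_decomp (q t : ℤ) (k : ℕ) [NeZero k] (hk : 3 ≤ k) :
    wheelTreeSum q t k
      = (∑ f ∈ (Finset.univ : Finset (ZMod k → Fin 3)).filter
            (fun f => ∀ v, ¬(f v = 1 ∧ f (v + 1) = 2)),
          q ^ (Finset.univ.filter (fun v => f v = 1)).card *
            t ^ (Finset.univ.filter (fun v => f v = 0)).card) - q ^ k - 1 := by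
  have h1 : (1 : ZMod k) ≠ 0 := by
    haveI : Fact (1 < k) := ⟨by omega⟩
    exact one_ne_zero
  set S := (Finset.univ : Finset (ZMod k → Fin 3)).filter
    (fun f => ∀ v, ¬(f v = 1 ∧ f (v + 1) = 2)) with hS
  set w : (ZMod k → Fin 3) → ℤ := fun f =>
    q ^ (Finset.univ.filter (fun v => f v = 1)).card *
      t ^ (Finset.univ.filter (fun v => f v = 0)).card with hw
  have hsplit : (∑ f ∈ S.filter (fun f => ∃ v, f v = 0), w f)
      + (∑ f ∈ S.filter (fun f => ¬ ∃ v, f v = 0), w f) = ∑ f ∈ S, w f :=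
    Finset.sum_filter_add_sum_filter_not S _ w
  have htree : wheelTreeSum q t k = ∑ f ∈ S.filter (fun f => ∃ v, f v = 0), w f := by
    rw [wheelTreeSum, hS, Finset.filter_filter]
    apply Finset.sum_congr _ (fun f _ => rfl)
    apply Finset.filter_congr
    intro f _
    exact and_comm
  have hconsts : S.filter (fun f => ¬ ∃ v, f v = 0)
      = {(fun _ => 1 : ZMod k → Fin 3), (fun _ => 2 : ZMod k → Fin 3)} := by
    ext g
    simp only [hS, Finset.mem_filter, Finset.mem_univ, true_and, Finset.mem_insert,
      Finset.mem_singleton]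
    constructor
    · rintro ⟨hQ, hnP⟩
      push_neg at hnP
      exact const_of_noZero_noBad g hQ hnP
    · rintro (rfl | rfl)
      · refine ⟨fun v h => by simpa using h.2, ?_⟩
        push_neg
        intro v
        decide
      · refine ⟨fun v h => by simpa using h.1, ?_⟩
        push_neg
        intro v
        decide
  have hne : (fun _ => 1 : ZMod k → Fin 3) ≠ (fun _ => 2) := by
    intro hcon
    have := congrFun hcon 0
    simp at this
  have hw1 : w (fun _ => 1) = q ^ k := by
    rw [hw]
    simp [Finset.filter_true_of_mem, Finset.card_univ, ZMod.card]
  have hw2 : w (fun _ => 2) = 1 := by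
    rw [hw]
    simp
  have hsum2 : ∑ f ∈ S.filter (fun f => ¬ ∃ v, f v = 0), w f = q ^ k + 1 := by
    rw [hconsts, Finset.sum_pair hne, hw1, hw2]
  rw [htree]
  rw [hsum2] at hsplit
  linarith

/-- The determinant of the reduced Laplacian of the `(q,t)`-wheel graph equals
the weighted spanning-tree polynomial `𝒲_k(q,t)`. -/
theorem det_wheelLap_eq_treeSum (q t : ℤ) (k : ℕ) [NeZero k] (hk : 3 ≤ k) :
    (wheelLap q t k).det = wheelTreeSum q t k := by
  obtain ⟨α, hroot⟩ : ∃ α : ℂ, α^2 - (1 + (q:ℂ) + t)*α + q = 0 := by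
    have hdeg : (Polynomial.C (1:ℂ) * Polynomial.X^2
        + Polynomial.C (-(1+(q:ℂ)+t)) * Polynomial.X + Polynomial.C (q:ℂ)).degree = 2 :=
      Polynomial.degree_quadratic one_ne_zero
    obtain ⟨α, hα⟩ := Complex.exists_root (by rw [hdeg]; norm_num)
    refine ⟨α, ?_⟩
    have heval := hα
    simp only [Polynomial.IsRoot.def, Polynomial.eval_add, Polynomial.eval_mul,
      Polynomial.eval_pow, Polynomial.eval_C, Polynomial.eval_X] at heval
    linear_combination heval
  set β := 1 + (q:ℂ) + t - α with hβ
  have hsum : α + β = 1 + (q:ℂ) + t := by rw [hβ]; ring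
  have hprod : α * β = (q:ℂ) := by rw [hβ]; linear_combination -hroot
  have hdet : (((wheelLap q t k).det : ℤ) : ℂ) = α^k + β^k - (q:ℂ)^k - 1 := by
    have hmap : (((wheelLap q t k).det : ℤ) : ℂ)
        = ((wheelLap q t k).map (Int.cast : ℤ → ℂ)).det :=
      RingHom.map_det (Int.castRingHom ℂ) (wheelLap q t k)
    rw [hmap]
    exact det_wheelLap_complex hk q t α β hsum hprod
  obtain ⟨n, rfl⟩ : ∃ n, k = n + 1 := ⟨k - 1, by omega⟩
  have htreeC : ((wheelTreeSum q t (n+1) : ℤ) : ℂ) = α^(n+1) + β^(n+1) - (q:ℂ)^(n+1) - 1 := by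
    rw [treeSum_decomp q t (n+1) hk]
    push_cast
    rw [← sum_prod_Tm (k := n+1) q t, ← trace_pow_cyclic (Tm q t) (n+1),
      trace_Tm_pow q t α β hsum hprod n]
  have : (((wheelLap q t (n+1)).det : ℤ) : ℂ) = ((wheelTreeSum q t (n+1) : ℤ) : ℂ) := by
    rw [hdet, htreeC]
  exact_mod_cast this
end
end

section
/- Every critical configuration [c₁,...,c_k] of the dollar game on the (q,t)-wheel graph W_k(q,t) with t ≥ 1 contains at least one entry c_i with 1+q ≤ c_i ≤ q+t. -/
/-- Firing rim vertex `v` of `W_k(q,t)`. -/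
def fire (q t : ℤ) {k : ℕ} [NeZero k] (c : ZMod k → ℤ) (v : ZMod k) : ZMod k → ℤ :=
  fun w => c w - (if w = v then 1 + q + t else 0) + (if w = v + 1 then q else 0) +
    (if w = v - 1 then 1 else 0)

/-- A legal rim-vertex firing step. -/
def FireStep (q t : ℤ) {k : ℕ} [NeZero k] (c c' : ZMod k → ℤ) : Prop :=
  ∃ v, 1 + q + t ≤ c v ∧ c' = fire q t c v

/-- Stability: nonnegative entries, no rim vertex can fire. -/
def Stable (q t : ℤ) {k : ℕ} [NeZero k] (c : ZMod k → ℤ) : Prop :=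
  (∀ v, 0 ≤ c v) ∧ ∀ v, ¬(1 + q + t ≤ c v)

/-- Recurrence: after firing the hub (adding `t` chips to every rim vertex),
some sequence of rim-vertex firings returns to `c`. -/
def Recurrent (q t : ℤ) {k : ℕ} [NeZero k] (c : ZMod k → ℤ) : Prop :=
  Relation.ReflTransGen (FireStep q t) (fun v => c v + t) c

/-- A critical configuration is one that is stable and recurrent. -/
def Critical (q t : ℤ) {k : ℕ} [NeZero k] (c : ZMod k → ℤ) : Prop :=
  Stable q t c ∧ Recurrent q t c

/-- Every critical configuration `[c₁,…,c_k]` of the dollar game on the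
`(q,t)`-wheel graph `W_k(q,t)` with `t ≥ 1` has at least one entry `cᵢ` with
`1+q ≤ cᵢ ≤ q+t`. -/
theorem critical_has_big_entry (q t : ℤ) (hq : 0 ≤ q) (ht : 1 ≤ t)
    (k : ℕ) [NeZero k] (hk : 3 ≤ k) (c : ZMod k → ℤ) (hc : Critical q t c) :
    ∃ v, 1 + q ≤ c v ∧ c v ≤ q + t := by
  obtain ⟨⟨_, hstab⟩, hrec⟩ := hc
  by_contra h
  push_neg at h
  have hle : ∀ v, c v ≤ q := by
    intro v
    have h1 := hstab v
    have h2 := h v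
    omega
  -- no fire step possible from c + t
  have hstep : ∀ v : ZMod k, ¬ (1 + q + t ≤ c v + t) := by
    intro v; have := hle v; omega
  rcases hrec.cases_head with heq | ⟨b, ⟨v, hv, _⟩, _⟩
  · have := congrFun heq (0 : ZMod k)
    simp at this
    omega
  · exact hstep v hv
end

section
/- For k ≥ 3, the cokernel of the k×k circulant matrix circ(1+q+t, −q, 0,...,0, −1) over ℤ (for fixed integers q ≥ 0, t ≥ 1) is isomorphic to the cokernel of the 2×2 integer matrix [[q·F̂_{2k−4} + 1, q·F̂_{2k−2}], [F̂_{2k−2}, F̂_{2k} − 1]]. In particular the critical group of the (q,t)-wheel graph is a product of at most two cyclic groups. -/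
open Matrix


/-- The bivariate Fibonacci polynomial `F̂_{2m}(q,t)` (so `Fhat q t m = F̂_{2m}`):
`F̂_0 = 1`, `F̂_2 = t+1+q`, `F̂_{2m+4} = (1+q+t)F̂_{2m+2} − qF̂_{2m}`. -/
def Fhat (q t : ℤ) : ℕ → ℤ
  | 0 => 1
  | 1 => t + 1 + q
  | (m + 2) => (1 + q + t) * Fhat q t (m + 1) - q * Fhat q t m

/-- Auxiliary vector sequence: `useq m = (-a_m, b_m)` where `e_m ≡ a_m e_0 + b_m e_1`
in the cokernel of the circulant. -/
private def useq (q t : ℤ) : ℕ → Fin 2 → ℤ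
  | 0 => ![(-1 : ℤ), 0]
  | 1 => ![(0 : ℤ), 1]
  | (m + 2) => (1 + q + t) • useq q t (m + 1) - q • useq q t m

private lemma useq_rec (q t : ℤ) (m : ℕ) :
    useq q t (m + 2) = (1 + q + t) • useq q t (m + 1) - q • useq q t m := rfl

private lemma useq_zero (q t : ℤ) : useq q t 0 = ![(-1 : ℤ), 0] := rfl
private lemma useq_one (q t : ℤ) : useq q t 1 = ![(0 : ℤ), 1] := rfl

private lemma useq_fhat (q t : ℤ) (m : ℕ) :
    useq q t (m + 2) 0 = q * Fhat q t m ∧ useq q t (m + 2) 1 = Fhat q t (m + 1) := by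
  induction m using Nat.twoStepInduction with
  | zero =>
    rw [useq_rec, useq_zero, useq_one]
    refine ⟨?_, ?_⟩ <;>
      simp only [Pi.sub_apply, Pi.smul_apply, smul_eq_mul, Matrix.cons_val_zero,
        Matrix.cons_val_one, Matrix.head_cons, Fhat] <;> ring
  | one =>
    rw [useq_rec, useq_rec, useq_zero, useq_one]
    refine ⟨?_, ?_⟩ <;>
      simp only [Pi.sub_apply, Pi.smul_apply, smul_eq_mul, Matrix.cons_val_zero,
        Matrix.cons_val_one, Matrix.head_cons, Fhat] <;> ring
  | more n ih1 ih2 =>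
    rw [useq_rec]
    refine ⟨?_, ?_⟩ <;>
      simp only [Pi.sub_apply, Pi.smul_apply, smul_eq_mul, ih1.1, ih1.2, ih2.1, ih2.2, Fhat] <;>
      ring

/-- For `k ≥ 3` and integers `q ≥ 0`, `t ≥ 1`, the cokernel of the circulant
`circ(1+q+t, −q, 0, …, 0, −1)` (the critical group of the `(q,t)`-wheel graph)
is isomorphic to the cokernel of the `2×2` matrix
`[[q·F̂_{2k−4}+1, q·F̂_{2k−2}], [F̂_{2k−2}, F̂_{2k}−1]]`; in particular it is a
product of at most two cyclic groups. -/
theorem coker_wheelLap_iso_coker_two_by_two (q t : ℤ) (hq : 0 ≤ q) (ht : 1 ≤ t)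
    (k : ℕ) [NeZero k] (hk : 3 ≤ k) :
    Nonempty
      (((ZMod k → ℤ) ⧸ LinearMap.range (wheelLap q t k).mulVecLin) ≃+
        ((Fin 2 → ℤ) ⧸ LinearMap.range
          (!![q * Fhat q t (k - 2) + 1, q * Fhat q t (k - 1);
              Fhat q t (k - 1), Fhat q t k - 1] : Matrix (Fin 2) (Fin 2) ℤ).mulVecLin)) := by
  obtain ⟨m, rfl⟩ : ∃ m, k = m + 3 := ⟨k - 3, by omega⟩
  have e2 : m + 3 - 2 = m + 1 := by omega
  have e1 : m + 3 - 1 = m + 2 := by omega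
  rw [e2, e1]
  set k := m + 3 with hk3
  set u : ℕ → Fin 2 → ℤ := useq q t with hu
  set L : Matrix (ZMod k) (ZMod k) ℤ := wheelLap q t k with hLdef
  set B : Matrix (Fin 2) (Fin 2) ℤ :=
    !![q * Fhat q t (m + 1) + 1, q * Fhat q t (m + 2);
       Fhat q t (m + 2), Fhat q t (m + 3) - 1] with hBdef
  set φ : (ZMod k → ℤ) →ₗ[ℤ] (Fin 2 → ℤ) :=
    (Matrix.of fun (i : Fin 2) (j : ZMod k) => u j.val i).mulVecLin with hφdef
  -- basic facts
  have hklt : ∀ a : ZMod k, a.val < k := fun a => ZMod.val_lt a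
  have hval : ∀ a : ZMod k, ((a.val : ℕ) : ZMod k) = a := fun a => ZMod.natCast_rightInverse a
  have hone : (1 : ZMod k) ≠ 0 := by
    have : ((1 : ℕ) : ZMod k) ≠ 0 := by
      rw [Ne, ZMod.natCast_eq_zero_iff]
      intro h
      have := Nat.le_of_dvd (by norm_num) h
      omega
    simpa using this
  have htwo : (2 : ZMod k) ≠ 0 := by
    have : ((2 : ℕ) : ZMod k) ≠ 0 := by
      rw [Ne, ZMod.natCast_eq_zero_iff]
      intro h
      have := Nat.le_of_dvd (by norm_num) h
      omega
    simpa using this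
  have d1 : ∀ j : ZMod k, j ≠ j + 1 := fun j h => hone (by linear_combination -h)
  have d2 : ∀ j : ZMod k, j ≠ j - 1 := fun j h => hone (by linear_combination h)
  have d3 : ∀ j : ZMod k, j - 1 ≠ j + 1 := fun j h => htwo (by linear_combination -h)
  -- φ on basis vectors
  have hφe : ∀ a : ZMod k, φ (Pi.single a 1) = u a.val := by
    intro a
    funext i
    rw [hφdef]
    simp [Matrix.mulVecLin_apply, Matrix.mulVec_single]
  -- columns of L
  have hcol : ∀ j : ZMod k, (Lᵀ) j
      = (1 + q + t) • Pi.single j (1 : ℤ) - q • Pi.single (j - 1) (1 : ℤ)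
        - Pi.single (j + 1) (1 : ℤ) := by
    intro j
    funext i
    have hc1 : (j = i + 1) ↔ (i = j - 1) := eq_comm.trans eq_sub_iff_add_eq.symm
    have hc2 : (j = i - 1) ↔ (i = j + 1) := eq_sub_iff_add_eq.trans eq_comm
    simp only [Matrix.transpose_apply, hLdef, wheelLap, Matrix.of_apply, hc1, hc2,
      Pi.sub_apply, Pi.smul_apply, Pi.single_apply, smul_eq_mul]
    by_cases h1 : i = j
    · subst h1
      simp [d2 i, d1 i]
    · by_cases h2 : i = j - 1
      · subst h2
        simp [d2 j, (d2 j).symm, d3 j]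
      · by_cases h3 : i = j + 1
        · subst h3
          simp [d1 j, (d1 j).symm, (d3 j).symm]
        · simp [h1, Ne.symm h1, h2, h3]
  have hcolmem : ∀ j : ZMod k, (Lᵀ) j ∈ LinearMap.range L.mulVecLin := by
    intro j
    refine ⟨Pi.single j 1, ?_⟩
    rw [Matrix.mulVecLin_apply, Matrix.mulVec_single]
    funext i
    simp [Matrix.transpose_apply]
  have hφcol : ∀ j : ZMod k,
      φ ((Lᵀ) j) = (1 + q + t) • u j.val - q • u ((j - 1).val) - u ((j + 1).val) := by
    intro j
    rw [hcol j, map_sub, map_sub, _root_.map_smul, _root_.map_smul, hφe, hφe, hφe]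
  -- the three cases for columns
  have heqlast : φ ((Lᵀ) ((m + 2 : ℕ) : ZMod k)) = u (m + 3) - u 0 := by
    have hv : ((m + 2 : ℕ) : ZMod k).val = m + 2 := ZMod.val_cast_of_lt (by omega)
    have hvm : (((m + 2 : ℕ) : ZMod k) - 1).val = m + 1 := by
      have : ((m + 2 : ℕ) : ZMod k) - 1 = ((m + 1 : ℕ) : ZMod k) := by
        push_cast; ring
      rw [this, ZMod.val_cast_of_lt (by omega)]
    have hvp : (((m + 2 : ℕ) : ZMod k) + 1).val = 0 := by
      have : ((m + 2 : ℕ) : ZMod k) + 1 = ((m + 3 : ℕ) : ZMod k) := by push_cast; ring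
      rw [this, hk3, ZMod.natCast_self, ZMod.val_zero]
    rw [hφcol, hv, hvm, hvp, hu, useq_rec q t (m + 1)]
  have heq0 : φ ((Lᵀ) (0 : ZMod k)) = (u (m + 4) - u 1) - (1 + q + t) • (u (m + 3) - u 0) := by
    have hv : ((0 : ZMod k)).val = 0 := ZMod.val_zero
    have hvm : ((0 : ZMod k) - 1).val = m + 2 := by
      have : (0 : ZMod k) - 1 = ((m + 2 : ℕ) : ZMod k) := by
        have h3 : ((m + 3 : ℕ) : ZMod k) = 0 := by rw [hk3, ZMod.natCast_self]
        push_cast at h3 ⊢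
        linear_combination -h3
      rw [this, ZMod.val_cast_of_lt (by omega)]
    have hvp : ((0 : ZMod k) + 1).val = 1 := by
      haveI : Fact (1 < k) := ⟨by omega⟩
      rw [zero_add, ZMod.val_one]
    rw [hφcol, hv, hvm, hvp, hu, useq_rec q t (m + 2), useq_rec q t (m + 1)]
    module
  have heqint : ∀ j : ZMod k, 0 < j.val → j.val < m + 2 → φ ((Lᵀ) j) = 0 := by
    intro j h0 h2
    obtain ⟨v, hv⟩ : ∃ v, j.val = v + 1 := ⟨j.val - 1, by omega⟩
    have hvm : (j - 1).val = v := by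
      have hj : j = ((v + 1 : ℕ) : ZMod k) := by rw [← hv, hval]
      have : j - 1 = ((v : ℕ) : ZMod k) := by rw [hj]; push_cast; ring
      rw [this, ZMod.val_cast_of_lt (by omega)]
    have hvp : (j + 1).val = v + 2 := by
      have hj : j = ((v + 1 : ℕ) : ZMod k) := by rw [← hv, hval]
      have : j + 1 = ((v + 2 : ℕ) : ZMod k) := by rw [hj]; push_cast; ring
      rw [this, ZMod.val_cast_of_lt (by omega)]
    rw [hφcol, hv, hvm, hvp, hu, useq_rec q t v]
    module
  -- columns of B
  have hBcol0 : B.mulVec ![1, 0] = u (m + 3) - u 0 := by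
    funext i
    have h0 : u (m + 3) 0 = q * Fhat q t (m + 1) := (useq_fhat q t (m + 1)).1
    have h1 : u (m + 3) 1 = Fhat q t (m + 2) := (useq_fhat q t (m + 1)).2
    have hz : u 0 = ![(-1 : ℤ), 0] := useq_zero q t
    fin_cases i <;>
      simp only [hBdef, Matrix.mulVec, dotProduct, Fin.sum_univ_two, Matrix.cons_val',
        Matrix.cons_val_zero, Matrix.cons_val_one, Matrix.head_cons, Matrix.empty_val',
        Matrix.cons_val_fin_one, Matrix.head_fin_const, Matrix.of_apply, Pi.sub_apply,
        Fin.isValue, Fin.zero_eta, Fin.mk_one, h0, h1, hz] <;> ring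
  have hBcol1 : B.mulVec ![0, 1] = u (m + 4) - u 1 := by
    funext i
    have h0 : u (m + 4) 0 = q * Fhat q t (m + 2) := (useq_fhat q t (m + 2)).1
    have h1 : u (m + 4) 1 = Fhat q t (m + 3) := (useq_fhat q t (m + 2)).2
    have hz : u 1 = ![(0 : ℤ), 1] := useq_one q t
    fin_cases i <;>
      simp only [hBdef, Matrix.mulVec, dotProduct, Fin.sum_univ_two, Matrix.cons_val',
        Matrix.cons_val_zero, Matrix.cons_val_one, Matrix.head_cons, Matrix.empty_val',
        Matrix.cons_val_fin_one, Matrix.head_fin_const, Matrix.of_apply, Pi.sub_apply,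
        Fin.isValue, Fin.zero_eta, Fin.mk_one, h0, h1, hz] <;> ring
  have hr0 : u (m + 3) - u 0 ∈ LinearMap.range B.mulVecLin :=
    ⟨![1, 0], by rw [Matrix.mulVecLin_apply, hBcol0]⟩
  have hr1 : u (m + 4) - u 1 ∈ LinearMap.range B.mulVecLin :=
    ⟨![0, 1], by rw [Matrix.mulVecLin_apply, hBcol1]⟩
  -- map φ (range L) = range B
  have hmap : Submodule.map φ (LinearMap.range L.mulVecLin) = LinearMap.range B.mulVecLin := by
    apply le_antisymm
    · rw [Matrix.range_mulVecLin, Submodule.map_span, Submodule.span_le]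
      rintro x ⟨y, ⟨j, rfl⟩, rfl⟩
      change φ ((Lᵀ) j) ∈ _
      rcases Nat.eq_zero_or_pos j.val with h0 | h0
      · have hj : j = 0 := by rw [← hval j, h0]; simp
        rw [hj, heq0]
        exact sub_mem hr1 (Submodule.smul_mem _ _ hr0)
      · rcases Nat.lt_or_ge j.val (m + 2) with h2 | h2
        · rw [heqint j h0 h2]
          exact zero_mem _
        · have hj : j = ((m + 2 : ℕ) : ZMod k) := by
            have : j.val = m + 2 := by have := hklt j; omega
            rw [← hval j, this]
          rw [hj, heqlast]
          exact hr0
    · rintro x ⟨w, rfl⟩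
      have hg0 : u (m + 3) - u 0 ∈ Submodule.map φ (LinearMap.range L.mulVecLin) := by
        rw [← heqlast]
        exact Submodule.mem_map_of_mem (hcolmem _)
      have hg1 : u (m + 4) - u 1 ∈ Submodule.map φ (LinearMap.range L.mulVecLin) := by
        have h1 : φ ((Lᵀ) (0 : ZMod k)) ∈ Submodule.map φ (LinearMap.range L.mulVecLin) :=
          Submodule.mem_map_of_mem (hcolmem _)
        have := add_mem h1 (Submodule.smul_mem _ (1 + q + t) hg0)
        rw [heq0] at this
        simpa using this
      have hx : B.mulVecLin w = w 0 • (u (m + 3) - u 0) + w 1 • (u (m + 4) - u 1) := by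
        rw [← hBcol0, ← hBcol1, Matrix.mulVecLin_apply]
        funext i
        fin_cases i <;>
          simp only [hBdef, Matrix.mulVec, dotProduct, Fin.sum_univ_two, Matrix.cons_val',
        Matrix.cons_val_zero, Matrix.cons_val_one, Matrix.head_cons, Matrix.empty_val',
        Matrix.cons_val_fin_one, Matrix.head_fin_const, Matrix.of_apply, Pi.sub_apply,
        Fin.isValue, Fin.zero_eta, Fin.mk_one, Pi.add_apply, Pi.smul_apply, smul_eq_mul] <;> ring
      rw [hx]
      exact add_mem (Submodule.smul_mem _ _ hg0) (Submodule.smul_mem _ _ hg1)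
  -- kernel of φ is inside range L
  have hsingle : ∀ n : ℕ,
      Pi.single ((n : ℕ) : ZMod k) (1 : ℤ) + (u n 0) • Pi.single (0 : ZMod k) (1 : ℤ)
        - (u n 1) • Pi.single (1 : ZMod k) (1 : ℤ) ∈ LinearMap.range L.mulVecLin := by
    intro n
    induction n using Nat.twoStepInduction with
    | zero =>
      have h0 : u 0 0 = -1 := by rw [hu, useq_zero]; simp
      have h1 : u 0 1 = 0 := by rw [hu, useq_zero]; simp
      rw [Nat.cast_zero, h0, h1]
      have : (Pi.single (0 : ZMod k) (1 : ℤ) : ZMod k → ℤ)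
          + (-1 : ℤ) • (Pi.single (0 : ZMod k) (1 : ℤ) : ZMod k → ℤ)
          - (0 : ℤ) • (Pi.single (1 : ZMod k) (1 : ℤ) : ZMod k → ℤ) = 0 := by module
      rw [this]
      exact zero_mem _
    | one =>
      have h0 : u 1 0 = 0 := by rw [hu, useq_one]; simp
      have h1 : u 1 1 = 1 := by rw [hu, useq_one]; simp
      rw [Nat.cast_one, h0, h1]
      have : (Pi.single (1 : ZMod k) (1 : ℤ) : ZMod k → ℤ)
          + (0 : ℤ) • (Pi.single (0 : ZMod k) (1 : ℤ) : ZMod k → ℤ)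
          - (1 : ℤ) • (Pi.single (1 : ZMod k) (1 : ℤ) : ZMod k → ℤ) = 0 := by module
      rw [this]
      exact zero_mem _
    | more n ih1 ih2 =>
      have hcolrel : (Lᵀ) ((n + 1 : ℕ) : ZMod k)
          = (1 + q + t) • Pi.single ((n + 1 : ℕ) : ZMod k) (1 : ℤ)
            - q • Pi.single ((n : ℕ) : ZMod k) (1 : ℤ)
            - Pi.single ((n + 2 : ℕ) : ZMod k) (1 : ℤ) := by
        rw [hcol]
        have e1 : ((n + 1 : ℕ) : ZMod k) - 1 = ((n : ℕ) : ZMod k) := by push_cast; ring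
        have e2 : ((n + 1 : ℕ) : ZMod k) + 1 = ((n + 2 : ℕ) : ZMod k) := by push_cast; ring
        rw [e1, e2]
      have key := sub_mem (sub_mem (Submodule.smul_mem _ (1 + q + t) ih2)
        (Submodule.smul_mem _ q ih1)) (hcolmem ((n + 1 : ℕ) : ZMod k))
      have heq : Pi.single ((n + 2 : ℕ) : ZMod k) (1 : ℤ)
            + (u (n + 2) 0) • Pi.single (0 : ZMod k) (1 : ℤ)
            - (u (n + 2) 1) • Pi.single (1 : ZMod k) (1 : ℤ)
          = (1 + q + t) • (Pi.single ((n + 1 : ℕ) : ZMod k) (1 : ℤ)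
              + (u (n + 1) 0) • Pi.single (0 : ZMod k) (1 : ℤ)
              - (u (n + 1) 1) • Pi.single (1 : ZMod k) (1 : ℤ))
            - q • (Pi.single ((n : ℕ) : ZMod k) (1 : ℤ)
              + (u n 0) • Pi.single (0 : ZMod k) (1 : ℤ)
              - (u n 1) • Pi.single (1 : ZMod k) (1 : ℤ))
            - (Lᵀ) ((n + 1 : ℕ) : ZMod k) := by
        rw [hcolrel]
        have h0 : u (n + 2) 0 = (1 + q + t) * u (n + 1) 0 - q * u n 0 := by
          rw [hu, useq_rec]; simp [Pi.sub_apply, Pi.smul_apply, smul_eq_mul]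
        have h1 : u (n + 2) 1 = (1 + q + t) * u (n + 1) 1 - q * u n 1 := by
          rw [hu, useq_rec]; simp [Pi.sub_apply, Pi.smul_apply, smul_eq_mul]
        rw [h0, h1]
        module
      rw [heq]
      exact key
  have hker : ∀ v : ZMod k → ℤ, φ v = 0 → v ∈ LinearMap.range L.mulVecLin := by
    intro v hv
    -- ψ v := v + (φ v 0) • e 0 - (φ v 1) • e 1 lands in range L for all v
    set ψ : (ZMod k → ℤ) →ₗ[ℤ] (ZMod k → ℤ) :=
      LinearMap.id + (((LinearMap.proj 0).comp φ).smulRight (Pi.single (0 : ZMod k) (1 : ℤ)))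
        - (((LinearMap.proj 1).comp φ).smulRight (Pi.single (1 : ZMod k) (1 : ℤ))) with hψdef
    have hψ : ∀ w, ψ w = w + (φ w 0) • Pi.single (0 : ZMod k) (1 : ℤ)
        - (φ w 1) • Pi.single (1 : ZMod k) (1 : ℤ) := by
      intro w
      simp [hψdef]
    have htop : ∀ w : ZMod k → ℤ, ψ w ∈ LinearMap.range L.mulVecLin := by
      have hle : ⊤ ≤ Submodule.comap ψ (LinearMap.range L.mulVecLin) := by
        rw [← (Pi.basisFun ℤ (ZMod k)).span_eq, Submodule.span_le]
        rintro x ⟨a, rfl⟩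
        rw [SetLike.mem_coe, Submodule.mem_comap, Pi.basisFun_apply]
        have : ψ (Pi.single a (1 : ℤ)) = Pi.single ((a.val : ℕ) : ZMod k) (1 : ℤ)
            + (u a.val 0) • Pi.single (0 : ZMod k) (1 : ℤ)
            - (u a.val 1) • Pi.single (1 : ZMod k) (1 : ℤ) := by
          rw [hψ, hφe, hval]
        rw [this]
        exact hsingle a.val
      intro w
      exact Submodule.mem_comap.mp (hle (Submodule.mem_top (x := w)))
    have := htop v
    rw [hψ, hv] at this
    simpa using this
  -- surjectivity of φ
  have hsurj : Function.Surjective φ := by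
    intro x
    refine ⟨(-(x 0)) • Pi.single (0 : ZMod k) (1 : ℤ) + (x 1) • Pi.single (1 : ZMod k) (1 : ℤ), ?_⟩
    rw [map_add, _root_.map_smul, _root_.map_smul, hφe, hφe]
    funext i
    haveI : Fact (1 < k) := ⟨by omega⟩
    have hv0 : (0 : ZMod k).val = 0 := ZMod.val_zero
    have hv1 : (1 : ZMod k).val = 1 := ZMod.val_one k
    rw [hv0, hv1, hu]
    fin_cases i <;> simp [useq_zero, useq_one]
  -- assemble the isomorphism
  have hle : LinearMap.range L.mulVecLin ≤
      Submodule.comap φ (LinearMap.range B.mulVecLin) :=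
    Submodule.map_le_iff_le_comap.mp hmap.le
  let f := Submodule.mapQ (LinearMap.range L.mulVecLin) (LinearMap.range B.mulVecLin) φ hle
  have hfsurj : Function.Surjective f := by
    intro y
    obtain ⟨x, rfl⟩ := Submodule.Quotient.mk_surjective _ y
    obtain ⟨v, rfl⟩ := hsurj x
    exact ⟨Submodule.Quotient.mk v, by rw [Submodule.mapQ_apply]⟩
  have hfinj : Function.Injective f := by
    rw [← LinearMap.ker_eq_bot (f := f), LinearMap.ker_eq_bot']
    intro w hw
    obtain ⟨v, rfl⟩ := Submodule.Quotient.mk_surjective _ w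
    rw [Submodule.mapQ_apply, Submodule.Quotient.mk_eq_zero] at hw
    rw [← hmap] at hw
    obtain ⟨p, hp, hpv⟩ := hw
    have h0 : φ (v - p) = 0 := by rw [map_sub, hpv, sub_self]
    have := hker (v - p) h0
    have hv : v ∈ LinearMap.range L.mulVecLin := by
      have := add_mem this hp
      simpa using this
    rw [Submodule.Quotient.mk_eq_zero]
    exact hv
  exact ⟨(LinearEquiv.ofBijective f ⟨hfinj, hfsurj⟩).toAddEquiv⟩
end

section
/- Fix integers q ≥ 0, t ≥ 1, k ≥ 1, and let Q_k = 1 + q + q² + ... + q^k. The critical group of the deformed wheel graph W̃_k(q,t) (i.e., W_{k+1}(q,t) with all spokes between the hub and v₁ removed) is cyclic if and only if gcd(t, Q_k) = 1; in general its smaller invariant factor equals gcd(t, Q_k), i.e., the group is isomorphic to ℤ/d₁ℤ × ℤ/(d₁d₂)ℤ with d₁ = gcd(t, Q_k). -/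
/-- The reduced Laplacian of the deformed wheel graph `W̃_k(q,t)` (the graph
`W_{k+1}(q,t)` with all spokes between the hub and `v₁` removed), indexed by the
`k+1` rim vertices `ZMod (k+1)` (with `v₁` at index `0`): diagonal `1+q` at
`v₁` and `1+q+t` elsewhere, `−q` one step clockwise, `−1` one step
counterclockwise (entries written additively so degenerate small cases merge). -/
def defWheelLap (q t : ℤ) (k : ℕ) : Matrix (ZMod (k + 1)) (ZMod (k + 1)) ℤ :=
  Matrix.of fun i j =>
    (if i = j then (if i = 0 then 1 + q else 1 + q + t) else 0) +
      (if j = i + 1 ∧ j ≠ i then -q else 0) + (if j = i - 1 ∧ j ≠ i then -1 else 0)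

namespace DefWheel
open Submodule


variable (q t : ℤ)

def bb : ℕ → ℤ
  | 0 => 0
  | 1 => 1
  | (j+2) => (1+q+t) * bb (j+1) - q * bb j

lemma bb_rec (j : ℕ) : bb q t (j+2) = (1+q+t) * bb q t (j+1) - q * bb q t j := rfl

lemma dvd_bb_sub (j : ℕ) : t ∣ bb q t j - ∑ i ∈ Finset.range j, q ^ i := by
  induction j using Nat.twoStepInduction with
  | zero => simp [bb]
  | one => simp [bb]
  | more j ih1 ih2 =>
    have h1 : bb q t (j+2) - ∑ i ∈ Finset.range (j+2), q ^ i
        = (1+q) * (bb q t (j+1) - ∑ i ∈ Finset.range (j+1), q ^ i)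
          - q * (bb q t j - ∑ i ∈ Finset.range j, q ^ i) + t * bb q t (j+1) := by
      rw [bb_rec, geom_sum_succ' (x:=q) (n:=j+1), geom_sum_succ' (x:=q) (n:=j)]
      ring
    rw [h1]
    exact dvd_add (dvd_sub (Dvd.dvd.mul_left ih2 _) (Dvd.dvd.mul_left ih1 _)) ⟨bb q t (j+1), rfl⟩

def vv : ℕ → (Fin 2 → ℤ)
  | 0 => ![1, 0]
  | (j+1) => ![-q * bb q t j, bb q t (j+1)]

lemma vv_rec (j : ℕ) : vv q t (j+2) = (1+q+t) • vv q t (j+1) - q • vv q t j := by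
  funext i
  fin_cases i <;> rcases j with _ | j <;>
    simp [vv, bb_rec, bb] <;> ring

lemma vv_zero : vv q t 0 = ![1, 0] := rfl
lemma vv_one : vv q t 1 = ![0, 1] := by simp [vv, bb]

def rone (k' : ℕ) : Fin 2 → ℤ := vv q t (k'+2) - vv q t 0
def rtwo (k' : ℕ) : Fin 2 → ℤ := (1+q) • vv q t 0 - q • vv q t (k'+1) - vv q t 1

variable (k' : ℕ)

lemma rone_apply0 : rone q t k' 0 = -(1 + q * bb q t (k'+1)) := by
  simp [rone, vv]; ring
lemma rone_apply1 : rone q t k' 1 = bb q t (k'+2) := by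
  simp [rone, vv]
lemma rtwo_apply0 : rtwo q t k' 0 = 1 + q + q^2 * bb q t k' := by
  rcases k' with _ | m <;> simp [rtwo, vv, bb] <;> ring
lemma rtwo_apply1 : rtwo q t k' 1 = -(1 + q * bb q t (k'+1)) := by
  rcases k' with _ | m <;> simp [rtwo, vv, bb] <;> ring

lemma span_entries :
    Ideal.span {rone q t k' 0, rone q t k' 1, rtwo q t k' 0, rtwo q t k' 1}
      = Ideal.span {(Int.gcd t (∑ i ∈ Finset.range (k'+2), q ^ i) : ℤ)} := by
  set Q : ℤ := ∑ i ∈ Finset.range (k'+2), q ^ i with hQ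
  set I := Ideal.span {rone q t k' 0, rone q t k' 1, rtwo q t k' 0, rtwo q t k' 1} with hI
  have h1 : rone q t k' 0 ∈ I := Ideal.subset_span (by simp)
  have h2 : rone q t k' 1 ∈ I := Ideal.subset_span (by simp)
  have h3 : rtwo q t k' 0 ∈ I := Ideal.subset_span (by simp)
  have ht : t ∈ I := by
    have : t = -((1+q+t) * rone q t k' 0) - rtwo q t k' 0 - q * rone q t k' 1 := by
      rw [rone_apply0, rone_apply1, rtwo_apply0, bb_rec]; ring
    rw [this]
    exact Submodule.sub_mem _ (Submodule.sub_mem _ (Submodule.neg_mem _ (Ideal.mul_mem_left _ _ h1))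
      h3) (Ideal.mul_mem_left _ _ h2)
  obtain ⟨c, hc⟩ := dvd_bb_sub q t (k'+2)
  have hQI : Q ∈ I := by
    have : Q = rone q t k' 1 - t * c := by rw [rone_apply1]; omega
    rw [this]
    exact Submodule.sub_mem _ h2 (Ideal.mul_mem_right _ _ ht)
  apply le_antisymm
  · -- each entry divisible by the gcd
    have hg : ∀ x : ℤ, (Int.gcd t Q : ℤ) ∣ x → x ∈ Ideal.span {(Int.gcd t Q : ℤ)} := fun x hx =>
      Ideal.mem_span_singleton.2 hx
    have hgt : (Int.gcd t Q : ℤ) ∣ t := Int.gcd_dvd_left t Q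
    have hgQ : (Int.gcd t Q : ℤ) ∣ Q := Int.gcd_dvd_right t Q
    -- gcd divides bb j - partial sum for every j
    have key : ∀ j : ℕ, (Int.gcd t Q : ℤ) ∣ bb q t j - ∑ i ∈ Finset.range j, q ^ i :=
      fun j => hgt.trans (dvd_bb_sub q t j)
    rw [hI, Ideal.span_le]
    rintro x (rfl | rfl | rfl | rfl)
    · apply hg
      rw [rone_apply0]
      have e1 : 1 + q * bb q t (k'+1) = Q + q * (bb q t (k'+1) - ∑ i ∈ Finset.range (k'+1), q ^ i) := by
        rw [hQ, geom_sum_succ (x:=q) (n:=k'+1)]; ring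
      exact dvd_neg.2 (e1 ▸ dvd_add hgQ (Dvd.dvd.mul_left (key _) q))
    · apply hg
      rw [rone_apply1]
      have e1 : bb q t (k'+2) = (bb q t (k'+2) - Q) + Q := by ring
      exact e1 ▸ dvd_add (key _) hgQ
    · apply hg
      rw [rtwo_apply0]
      have e1 : 1 + q + q^2 * bb q t k' = Q + q^2 * (bb q t k' - ∑ i ∈ Finset.range k', q ^ i) := by
        rw [hQ, geom_sum_succ (x:=q) (n:=k'+1), geom_sum_succ (x:=q) (n:=k')]; ring
      exact e1 ▸ dvd_add hgQ (Dvd.dvd.mul_left (key _) _)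
    · apply hg
      rw [rtwo_apply1]
      have e1 : 1 + q * bb q t (k'+1) = Q + q * (bb q t (k'+1) - ∑ i ∈ Finset.range (k'+1), q ^ i) := by
        rw [hQ, geom_sum_succ (x:=q) (n:=k'+1)]; ring
      exact dvd_neg.2 (e1 ▸ dvd_add hgQ (Dvd.dvd.mul_left (key _) q))
  · rw [Ideal.span_le]
    rintro x (rfl : x = _)
    rw [Int.gcd_eq_gcd_ab t Q]
    exact Submodule.add_mem _ (Ideal.mul_mem_right _ _ ht) (Ideal.mul_mem_right _ _ hQI)




open Submodule

lemma exists_diag (N : Submodule ℤ (Fin 2 → ℤ)) :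
    ∃ c : Fin 2 → ℤ,
      Nonempty (((Fin 2 → ℤ) ⧸ N) ≃ₗ[ℤ]
          ((Fin 2 → ℤ) ⧸ Submodule.pi Set.univ fun i => Ideal.span {c i})) ∧
      Ideal.span {c 0, c 1} = ⨆ φ : (Fin 2 → ℤ) →ₗ[ℤ] ℤ, N.map φ := by
  obtain ⟨n, ⟨bM, bN, f, a, snf⟩⟩ := N.smithNormalForm (Pi.basisFun ℤ (Fin 2))
  classical
  set c : Fin 2 → ℤ := fun i => if h : ∃ j, f j = i then a h.choose else 0 with hcdef
  have hcf : ∀ j, c (f j) = a j := by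
    intro j
    have h : ∃ j', f j' = f j := ⟨j, rfl⟩
    have : h.choose = j := f.injective h.choose_spec
    simp only [hcdef, dif_pos h, this]
  have hc0 : ∀ i, (∀ j, f j ≠ i) → c i = 0 := by
    intro i hi
    have h : ¬ ∃ j, f j = i := by push_neg; exact hi
    simp only [hcdef, dif_neg h]
  have hval : ∀ (cc : Fin n → ℤ) (i : Fin 2),
      bM.equivFun (∑ j, cc j • ((bN j : Fin 2 → ℤ))) i
        = ∑ j, cc j * (a j * (if f j = i then 1 else 0)) := by
    intro cc i
    rw [map_sum]
    simp only [Finset.sum_apply]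
    congr 1; funext j
    rw [snf j, map_smul, map_smul]
    by_cases h : f j = i
    · simp [Module.Basis.equivFun_self, Pi.single_apply, h]
    · simp [Module.Basis.equivFun_self, Pi.single_apply, h, fun hh : i = f j => h hh.symm]
  refine ⟨c, ?_, ?_⟩
  · have hmap : Submodule.map ((bM.equivFun : (Fin 2 → ℤ) ≃ₗ[ℤ] (Fin 2 → ℤ)) : (Fin 2 → ℤ) →ₗ[ℤ] (Fin 2 → ℤ))
        N = Submodule.pi Set.univ fun i => Ideal.span {c i} := by
      ext x
      rw [Submodule.mem_map, Submodule.mem_pi]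
      simp only [Set.mem_univ, forall_true_left, Ideal.mem_span_singleton]
      constructor
      · rintro ⟨y, hy, rfl⟩ i
        obtain ⟨cc, hcc⟩ := (Module.Basis.mem_submodule_iff' bN).mp hy
        rw [hcc]
        rw [LinearEquiv.coe_coe, hval cc i]
        apply Finset.dvd_sum
        intro j _
        by_cases hfj : f j = i
        · rw [if_pos hfj, ← hfj, hcf j]
          exact Dvd.dvd.mul_left (dvd_mul_right _ _) _
        · rw [if_neg hfj]; simp
      · intro hx
        have hdvd : ∀ j, a j ∣ x (f j) := fun j => (hcf j) ▸ hx (f j)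
        choose d hd using hdvd
        refine ⟨∑ j, d j • ((bN j : Fin 2 → ℤ)), sum_mem fun j _ => smul_mem _ _ (bN j).2, ?_⟩
        funext i
        rw [LinearEquiv.coe_coe, hval d i]
        by_cases hex : ∃ j, f j = i
        · obtain ⟨j0, hj0⟩ := hex
          rw [Finset.sum_eq_single j0]
          · rw [if_pos hj0, mul_one, ← hj0, mul_comm, ← hd j0]
          · intro j _ hj
            rw [if_neg (fun h => hj (f.injective (h.trans hj0.symm))), mul_zero, mul_zero]
          · intro h; exact absurd (Finset.mem_univ j0) h
        · push_neg at hex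
          have : x i = 0 := by
            have := hx i
            rw [hc0 i hex] at this
            exact zero_dvd_iff.mp this
          rw [this, Finset.sum_eq_zero]
          intro j _
          rw [if_neg (hex j), mul_zero, mul_zero]
    exact ⟨Submodule.Quotient.equiv N _ (bM.equivFun : (Fin 2 → ℤ) ≃ₗ[ℤ] (Fin 2 → ℤ)) hmap⟩
  · -- the span of the diagonal entries is the coefficient ideal
    apply le_antisymm
    · rw [Ideal.span_le]
      rintro x (rfl | rfl)
      · by_cases hex : ∃ j, f j = (0 : Fin 2)
        · obtain ⟨j, hj⟩ := hex
          rw [← hj, hcf j]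
          have : a j = (bM.coord (f j)) ((bN j : Fin 2 → ℤ)) := by
            rw [snf j, map_smul, Module.Basis.coord_apply, Module.Basis.repr_self, smul_eq_mul,
              Finsupp.single_eq_same, mul_one]
          rw [this]
          exact le_iSup (fun φ : (Fin 2 → ℤ) →ₗ[ℤ] ℤ => N.map φ) (bM.coord (f j))
            ⟨_, (bN j).2, rfl⟩
        · push_neg at hex
          rw [hc0 0 hex]; exact zero_mem _
      · by_cases hex : ∃ j, f j = (1 : Fin 2)
        · obtain ⟨j, hj⟩ := hex
          rw [← hj, hcf j]
          have : a j = (bM.coord (f j)) ((bN j : Fin 2 → ℤ)) := by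
            rw [snf j, map_smul, Module.Basis.coord_apply, Module.Basis.repr_self, smul_eq_mul,
              Finsupp.single_eq_same, mul_one]
          rw [this]
          exact le_iSup (fun φ : (Fin 2 → ℤ) →ₗ[ℤ] ℤ => N.map φ) (bM.coord (f j))
            ⟨_, (bN j).2, rfl⟩
        · push_neg at hex
          rw [hc0 1 hex]; exact zero_mem _
    · apply iSup_le
      intro φ
      rintro x ⟨y, hy, rfl⟩
      obtain ⟨cc, hcc⟩ := (Module.Basis.mem_submodule_iff' bN).mp hy
      rw [hcc, map_sum]
      apply sum_mem
      intro j _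
      have he : φ (cc j • ((bN j : Fin 2 → ℤ))) = (cc j * φ (bM (f j))) • a j := by
        rw [snf j, map_smul, map_smul]
        simp only [smul_eq_mul]; ring
      rw [he]
      apply Submodule.smul_mem
      have h2 : f j = 0 ∨ f j = 1 := by
        rcases f j with ⟨i, hi⟩
        interval_cases i
        exacts [Or.inl rfl, Or.inr rfl]
      rw [← hcf j]
      rcases h2 with h | h <;> rw [h] <;> exact Ideal.subset_span (by simp)



open Submodule

def bezEquiv (α β u v : ℤ) (hb : u * α + v * β = 1) :
    (Fin 2 → ℤ) ≃ₗ[ℤ] (Fin 2 → ℤ) where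
  toFun := fun x => ![u * x 0 + v * x 1, -β * x 0 + α * x 1]
  invFun := fun y => ![α * y 0 - v * y 1, β * y 0 + u * y 1]
  map_add' := by
    intro x y; funext i; fin_cases i <;> (simp; ring)
  map_smul' := by
    intro m x; funext i; fin_cases i <;> (simp; ring)
  left_inv := by
    intro x
    funext i
    fin_cases i
    · show α * (u * x 0 + v * x 1) - v * (-β * x 0 + α * x 1) = x 0
      linear_combination x 0 * hb
    · show β * (u * x 0 + v * x 1) + u * (-β * x 0 + α * x 1) = x 1
      linear_combination x 1 * hb
  right_inv := by
    intro y
    funext i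
    fin_cases i
    · show u * (α * y 0 - v * y 1) + v * (β * y 0 + u * y 1) = y 0
      linear_combination y 0 * hb
    · show -β * (α * y 0 - v * y 1) + α * (β * y 0 + u * y 1) = y 1
      linear_combination y 1 * hb

lemma bezEquiv_apply (α β u v : ℤ) (hb : u * α + v * β = 1) (x : Fin 2 → ℤ) :
    bezEquiv α β u v hb x = ![u * x 0 + v * x 1, -β * x 0 + α * x 1] := rfl

lemma diag_transform (g α β u v : ℤ) (hb : u * α + v * β = 1) :
    Nonempty (((Fin 2 → ℤ) ⧸ Submodule.pi Set.univ fun i => Ideal.span {![g*α, g*β] i}) ≃ₗ[ℤ]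
      ((Fin 2 → ℤ) ⧸ Submodule.pi Set.univ fun i => Ideal.span {![g, g*α*β] i})) := by
  refine ⟨Submodule.Quotient.equiv _ _ (bezEquiv α β u v hb) ?_⟩
  ext y
  rw [Submodule.mem_map]
  simp only [Submodule.mem_pi, Set.mem_univ, forall_true_left, Ideal.mem_span_singleton]
  constructor
  · rintro ⟨x, hx, rfl⟩
    have h0 : g * α ∣ x 0 := by simpa using hx 0
    have h1 : g * β ∣ x 1 := by simpa using hx 1
    obtain ⟨s, hs⟩ := h0
    obtain ⟨m, hm⟩ := h1
    intro i
    fin_cases i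
    · show g ∣ u * x 0 + v * x 1
      rw [hs, hm]; exact ⟨u * α * s + v * β * m, by ring⟩
    · show g * α * β ∣ -β * x 0 + α * x 1
      rw [hs, hm]; exact ⟨m - s, by ring⟩
  · intro hy
    have h0 : g ∣ y 0 := by simpa using hy 0
    have h1 : g * α * β ∣ y 1 := by simpa using hy 1
    obtain ⟨s, hs⟩ := h0
    obtain ⟨m, hm⟩ := h1
    refine ⟨(bezEquiv α β u v hb).symm y, ?_, (bezEquiv α β u v hb).apply_symm_apply y⟩
    intro i
    fin_cases i
    · show g * α ∣ α * y 0 - v * y 1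
      rw [hs, hm]; exact ⟨s - v * β * m, by ring⟩
    · show g * β ∣ β * y 0 + u * y 1
      rw [hs, hm]; exact ⟨s + u * α * m, by ring⟩



open Submodule

lemma pi_to_zmod (c : Fin 2 → ℤ) :
    Nonempty (((Fin 2 → ℤ) ⧸ Submodule.pi Set.univ fun i => Ideal.span {c i}) ≃+
      (ZMod (c 0).natAbs × ZMod (c 1).natAbs)) := by
  classical
  refine ⟨((Submodule.quotientPi fun i : Fin 2 => Ideal.span ({c i} : Set ℤ)).toAddEquiv.trans
    ((AddEquiv.piCongrRight fun i : Fin 2 =>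
      (Int.quotientSpanEquivZMod (c i)).toAddEquiv).trans ?_))⟩
  exact { piFinTwoEquiv (fun i : Fin 2 => ZMod (c i).natAbs) with map_add' := fun x y => rfl }

section Phi
variable (k' : ℕ)

local notation "n" => k' + 1 + 1

def φl : (ZMod (k'+1+1) → ℤ) →ₗ[ℤ] (Fin 2 → ℤ) where
  toFun := fun x => ∑ i : ZMod (k'+1+1), x i • vv q t i.val
  map_add' := by
    intro x y
    simp only [Pi.add_apply, add_smul, Finset.sum_add_distrib]
  map_smul' := by
    intro m x
    simp only [Pi.smul_apply, smul_eq_mul, mul_smul, RingHom.id_apply, Finset.smul_sum]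

lemma φl_single (j : ZMod (k'+1+1)) (c : ℤ) :
    φl q t k' (Pi.single j c) = c • vv q t j.val := by
  simp only [φl, LinearMap.coe_mk, AddHom.coe_mk]
  rw [Finset.sum_eq_single j]
  · rw [Pi.single_eq_same]
  · intro i _ hij
    rw [Pi.single_eq_of_ne hij, zero_smul]
  · intro h; exact absurd (Finset.mem_univ j) h

lemma col_sum (j : ZMod (k'+1+1)) (w : ZMod (k'+1+1) → (Fin 2 → ℤ)) :
    ∑ i : ZMod (k'+1+1), defWheelLap q t (k'+1) i j • w i
      = (if j = 0 then 1+q else 1+q+t) • w j + (-q) • w (j-1) + (-1 : ℤ) • w (j+1) := by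
  haveI : Fact (1 < k'+1+1) := ⟨by omega⟩
  have hone : (1 : ZMod (k'+1+1)) ≠ 0 := one_ne_zero
  simp only [defWheelLap, Matrix.of_apply, add_smul, Finset.sum_add_distrib]
  congr 1
  congr 1
  · -- diagonal sum
    rw [Finset.sum_eq_single j]
    · rw [if_pos rfl]
    · intro i _ hij
      rw [if_neg hij, zero_smul]
    · intro h; exact absurd (Finset.mem_univ j) h
  · -- the -q sum, supported at i = j - 1
    rw [Finset.sum_eq_single (j - 1)]
    · have h1 : j = (j - 1) + 1 := by ring
      have h2 : j ≠ j - 1 := by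
        intro hh
        exact hone (by linear_combination hh)
      rw [if_pos ⟨h1, h2⟩]
    · intro i _ hij
      rw [if_neg, zero_smul]
      rintro ⟨h1, -⟩
      exact hij (eq_sub_of_add_eq h1.symm)
    · intro h; exact absurd (Finset.mem_univ _) h
  · -- the -1 sum, supported at i = j + 1
    rw [Finset.sum_eq_single (j + 1)]
    · have h1 : j = (j + 1) - 1 := by ring
      have h2 : j ≠ j + 1 := by
        intro hh
        exact hone (by linear_combination -hh)
      rw [if_pos ⟨h1, h2⟩]
    · intro i _ hij
      rw [if_neg, zero_smul]
      rintro ⟨h1, -⟩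
      exact hij (by linear_combination -h1)
    · intro h; exact absurd (Finset.mem_univ _) h

lemma lap_apply (i j : ZMod (k'+1+1)) : defWheelLap q t (k'+1) i j
    = (if i = j then (if i = 0 then 1 + q else 1 + q + t) else 0) +
      (if j = i + 1 ∧ j ≠ i then -q else 0) + (if j = i - 1 ∧ j ≠ i then -1 else 0) := rfl

def colv (j : ZMod (k'+1+1)) : Fin 2 → ℤ :=
  ∑ i : ZMod (k'+1+1), defWheelLap q t (k'+1) i j • vv q t i.val

lemma col_zero : colv q t k' 0 = rtwo q t k' := by
  haveI : Fact (1 < k'+1+1) := ⟨by omega⟩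
  rw [colv, col_sum, if_pos rfl]
  have h1 : ((0 : ZMod (k'+1+1)) - 1) = -1 := by ring
  have h2 : ((0 : ZMod (k'+1+1)) + 1) = 1 := by ring
  rw [h1, h2, ZMod.val_neg_one, ZMod.val_one, ZMod.val_zero, rtwo]
  module

lemma col_neg_one : colv q t k' (-1) = rone q t k' := by
  haveI : Fact (1 < k'+1+1) := ⟨by omega⟩
  rw [colv, col_sum]
  have hmod : ((k'+1+1 : ℕ) : ZMod (k'+1+1)) = 0 := ZMod.natCast_self _
  have h0 : (-1 : ZMod (k'+1+1)) ≠ 0 := by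
    intro hh
    have : ((1 : ZMod (k'+1+1))) = 0 := by linear_combination -hh
    exact one_ne_zero this
  have h1 : ((-1 : ZMod (k'+1+1)) - 1) = ((k' : ℕ) : ZMod (k'+1+1)) := by
    push_cast at hmod ⊢
    linear_combination -hmod
  have h2 : ((-1 : ZMod (k'+1+1)) + 1) = 0 := by ring
  rw [if_neg h0, h1, h2, ZMod.val_neg_one, ZMod.val_zero,
    ZMod.val_cast_of_lt (by omega : k' < k'+1+1), rone]
  rw [show k'+2 = (k'+1)+1 from rfl, vv_rec]
  module

lemma col_mid (j : ZMod (k'+1+1)) (hj0 : j ≠ 0) (hjn : j ≠ -1) : colv q t k' j = 0 := by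
  haveI : Fact (1 < k'+1+1) := ⟨by omega⟩
  have hj : ((j.val : ℕ) : ZMod (k'+1+1)) = j := ZMod.natCast_rightInverse j
  have hm0 : j.val ≠ 0 := by
    intro hh
    exact hj0 (by rw [← hj, hh]; simp)
  have hmn : j.val ≠ k'+1 := by
    intro hh
    apply hjn
    rw [← hj, hh]
    have hmod : ((k'+1+1 : ℕ) : ZMod (k'+1+1)) = 0 := ZMod.natCast_self _
    push_cast at hmod ⊢
    linear_combination hmod
  have hlt : j.val < k'+1+1 := ZMod.val_lt j
  obtain ⟨m, hm⟩ : ∃ m, j.val = m + 1 := ⟨j.val - 1, by omega⟩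
  rw [colv, col_sum, if_neg hj0]
  have h1 : (j - 1) = ((m : ℕ) : ZMod (k'+1+1)) := by
    rw [← hj, hm]
    push_cast
    ring
  have h2 : (j + 1) = (((m+2 : ℕ)) : ZMod (k'+1+1)) := by
    rw [← hj, hm]
    push_cast
    ring
  rw [h1, h2, ZMod.val_cast_of_lt (by omega : m < k'+1+1),
    ZMod.val_cast_of_lt (by omega : m + 2 < k'+1+1), hm, vv_rec]
  module

lemma vv_one' : vv q t 1 = ![0, 1] := by
  funext i; fin_cases i <;> simp [vv, bb]

def NN (k' : ℕ) : Submodule ℤ (Fin 2 → ℤ) := Submodule.span ℤ {rone q t k', rtwo q t k'}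

lemma colv_mem (j : ZMod (k'+1+1)) : colv q t k' j ∈ NN q t k' := by
  by_cases h0 : j = 0
  · subst h0
    rw [col_zero]
    exact Submodule.subset_span (by simp)
  by_cases hn : j = -1
  · subst hn
    rw [col_neg_one]
    exact Submodule.subset_span (by simp)
  · rw [col_mid q t k' j h0 hn]
    exact zero_mem _

lemma φl_mulVec (x : ZMod (k'+1+1) → ℤ) :
    φl q t k' ((defWheelLap q t (k'+1)).mulVec x) = ∑ j : ZMod (k'+1+1), x j • colv q t k' j := by
  show (∑ i : ZMod (k'+1+1), ((defWheelLap q t (k'+1)).mulVec x) i • vv q t i.val) = _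
  have key : ∀ i, ((defWheelLap q t (k'+1)).mulVec x) i • vv q t i.val
      = ∑ j : ZMod (k'+1+1), x j • (defWheelLap q t (k'+1) i j • vv q t i.val) := by
    intro i
    simp only [Matrix.mulVec, dotProduct]
    rw [Finset.sum_smul]
    exact Finset.sum_congr rfl fun j _ => by rw [mul_comm, mul_smul]
  simp only [key]
  rw [Finset.sum_comm]
  exact Finset.sum_congr rfl fun j _ => by rw [colv, Finset.smul_sum]

lemma φl_mulVec_mem (x : ZMod (k'+1+1) → ℤ) :
    φl q t k' ((defWheelLap q t (k'+1)).mulVec x) ∈ NN q t k' := by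
  rw [φl_mulVec]
  exact sum_mem fun j _ => Submodule.smul_mem _ _ (colv_mem q t k' j)

lemma φl_mulVec_single (j : ZMod (k'+1+1)) (c : ℤ) :
    φl q t k' ((defWheelLap q t (k'+1)).mulVec (Pi.single j c)) = c • colv q t k' j := by
  rw [Matrix.mulVec_single]
  show (∑ i : ZMod (k'+1+1), (defWheelLap q t (k'+1) i j * c) • vv q t i.val) = _
  rw [colv, Finset.smul_sum]
  apply Finset.sum_congr rfl
  intro i _
  rw [mul_comm, mul_smul]

lemma reduce (m : ℕ) (h1 : 1 ≤ m) : m ≤ k'+1 → ∀ x : ZMod (k'+1+1) → ℤ,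
    (∀ i : ZMod (k'+1+1), m < i.val → x i = 0) → φl q t k' x = 0 →
    x ∈ LinearMap.range (defWheelLap q t (k'+1)).mulVecLin := by
  haveI : Fact (1 < k'+1+1) := ⟨by omega⟩
  induction m, h1 using Nat.le_induction with
  | base =>
    intro _ x hsupp hker
    have h01 : (0 : ZMod (k'+1+1)) ≠ 1 := fun h => one_ne_zero h.symm
    have hx : x = x 0 • Pi.single (0 : ZMod (k'+1+1)) (1:ℤ) + x 1 • Pi.single 1 1 := by
      funext i
      by_cases hi0 : i = 0
      · subst hi0
        simp [Pi.single_eq_same, Pi.single_eq_of_ne h01]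
      · by_cases hi1 : i = 1
        · subst hi1
          simp [Pi.single_eq_same, Pi.single_eq_of_ne (one_ne_zero (α := ZMod (k'+1+1)))]
        · have hv : 1 < i.val := by
            have hv0 : i.val ≠ 0 := fun h => hi0 (by rw [← ZMod.natCast_rightInverse i, h]; simp)
            have hv1 : i.val ≠ 1 := fun h => hi1 (by rw [← ZMod.natCast_rightInverse i, h]; simp)
            omega
          simp [Pi.single_eq_of_ne hi0, Pi.single_eq_of_ne hi1, hsupp i hv]
    rw [hx] at hker ⊢
    rw [map_add, map_smul, map_smul, φl_single, φl_single, ZMod.val_zero, ZMod.val_one] at hker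
    rw [show vv q t 0 = ![1,0] from rfl, vv_one'] at hker
    have e0 := congr_fun hker 0
    have e1 := congr_fun hker 1
    simp at e0 e1
    rw [e0, e1]
    simp only [zero_smul, add_zero, zero_add]
    exact zero_mem _
  | succ m hm ih =>
    intro hm2 x hsupp hker
    have hk1 : 1 ≤ k' := by omega
    set L := defWheelLap q t (k'+1) with hL
    set jm : ZMod (k'+1+1) := ((m : ℕ) : ZMod (k'+1+1)) with hjm
    set c := x (((m+1 : ℕ)) : ZMod (k'+1+1)) with hc
    set y := L.mulVec (Pi.single jm c) with hy
    have hvm : jm.val = m := ZMod.val_cast_of_lt (by omega)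
    have hjm0 : jm ≠ 0 := by
      intro h
      have := congrArg ZMod.val h
      rw [hvm, ZMod.val_zero] at this
      omega
    have hjmn : jm ≠ -1 := by
      intro h
      have := congrArg ZMod.val h
      rw [hvm, ZMod.val_neg_one] at this
      omega
    have hcast : ∀ a b : ℕ, a < k'+1+1 → b < k'+1+1 → a ≠ b →
        ((a : ℕ) : ZMod (k'+1+1)) ≠ ((b : ℕ) : ZMod (k'+1+1)) := by
      intro a b ha hb hab h
      have := congrArg ZMod.val h
      rw [ZMod.val_cast_of_lt ha, ZMod.val_cast_of_lt hb] at this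
      exact hab this
    have hsupp' : ∀ i : ZMod (k'+1+1), m < i.val → (x + y) i = 0 := by
      intro i hi
      by_cases hival : i.val = m + 1
      · have hieq : i = (((m+1:ℕ)) : ZMod (k'+1+1)) := by
          rw [← ZMod.natCast_rightInverse i, hival]
        have hentry : L i jm = -1 := by
          rw [hieq, hL, lap_apply]
          rw [if_neg (hjm ▸ hcast (m+1) m (by omega) (by omega) (by omega))]
          have c2 : ¬ (jm = ((m+1:ℕ) : ZMod (k'+1+1)) + 1 ∧
              jm ≠ ((m+1:ℕ) : ZMod (k'+1+1))) := by
            rintro ⟨h2, -⟩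
            have h2' : jm = ((m+2 : ℕ) : ZMod (k'+1+1)) := by
              rw [h2]; push_cast; ring
            rcases Nat.lt_or_ge (m+2) (k'+1+1) with hlt | hge
            · exact (hjm ▸ hcast m (m+2) (by omega) hlt (by omega)) h2'
            · have hz : ((m+2:ℕ) : ZMod (k'+1+1)) = 0 := by
                have he : m + 2 = k'+1+1 := by omega
                rw [he]; exact ZMod.natCast_self _
              exact hjm0 (h2'.trans hz)
          rw [if_neg c2]
          have c3 : jm = ((m+1:ℕ) : ZMod (k'+1+1)) - 1 ∧ jm ≠ ((m+1:ℕ) : ZMod (k'+1+1)) := by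
            constructor
            · rw [hjm]; push_cast; ring
            · exact hjm ▸ hcast m (m+1) (by omega) (by omega) (by omega)
          rw [if_pos c3]
          ring
        rw [Pi.add_apply, hy, Matrix.mulVec_single]
        show x i + L i jm * c = 0
        rw [hentry, hieq, ← hc]
        ring
      · have hgt : m + 1 < i.val := by omega
        have hxz : x i = 0 := hsupp i hgt
        have hentry : L i jm = 0 := by
          rw [hL, lap_apply]
          have c1 : i ≠ jm := by
            intro h
            have := congrArg ZMod.val h
            rw [hvm] at this
            omega
          rw [if_neg c1]
          have c2 : ¬ (jm = i + 1 ∧ jm ≠ i) := by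
            rintro ⟨h2, -⟩
            have : i = ((m - 1 : ℕ) : ZMod (k'+1+1)) := by
              rw [hjm] at h2
              have : ((m:ℕ) : ZMod (k'+1+1)) - 1 = ((m - 1 : ℕ) : ZMod (k'+1+1)) := by
                push_cast [Nat.cast_sub hm]
                ring
              rw [← this, h2]
              ring
            have := congrArg ZMod.val this
            rw [ZMod.val_cast_of_lt (by omega : m - 1 < k'+1+1)] at this
            omega
          rw [if_neg c2]
          have c3 : ¬ (jm = i - 1 ∧ jm ≠ i) := by
            rintro ⟨h2, -⟩
            have : i = ((m + 1 : ℕ) : ZMod (k'+1+1)) := by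
              rw [hjm] at h2
              push_cast at h2 ⊢
              linear_combination -h2
            have := congrArg ZMod.val this
            rw [ZMod.val_cast_of_lt (by omega : m + 1 < k'+1+1)] at this
            omega
          rw [if_neg c3]
          ring
        rw [Pi.add_apply, hy, Matrix.mulVec_single]
        show x i + L i jm * c = 0
        rw [hentry, hxz]
        ring
    have hker' : φl q t k' (x + y) = 0 := by
      rw [map_add, hker, hy, φl_mulVec_single, col_mid q t k' jm hjm0 hjmn]
      simp
    have hxy : x + y ∈ LinearMap.range L.mulVecLin := ih (by omega) (x + y) hsupp' hker'
    have hymem : y ∈ LinearMap.range L.mulVecLin := ⟨Pi.single jm c, by rw [Matrix.mulVecLin_apply, hy]⟩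
    have : x = (x + y) - y := by ring
    rw [this]
    exact sub_mem hxy hymem

lemma coker_equiv :
    Nonempty (((ZMod (k'+1+1) → ℤ) ⧸ LinearMap.range (defWheelLap q t (k'+1)).mulVecLin) ≃ₗ[ℤ]
      ((Fin 2 → ℤ) ⧸ NN q t k')) := by
  haveI : Fact (1 < k'+1+1) := ⟨by omega⟩
  set L := defWheelLap q t (k'+1) with hL
  set ψ : (ZMod (k'+1+1) → ℤ) →ₗ[ℤ] ((Fin 2 → ℤ) ⧸ NN q t k') :=
    (NN q t k').mkQ.comp (φl q t k') with hψ
  have hker : LinearMap.range L.mulVecLin = LinearMap.ker ψ := by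
    apply le_antisymm
    · rintro z ⟨x, rfl⟩
      rw [LinearMap.mem_ker, hψ, LinearMap.comp_apply, Matrix.mulVecLin_apply,
        Submodule.mkQ_apply, Submodule.Quotient.mk_eq_zero]
      exact φl_mulVec_mem q t k' x
    · intro x hx
      rw [LinearMap.mem_ker, hψ, LinearMap.comp_apply, Submodule.mkQ_apply,
        Submodule.Quotient.mk_eq_zero, NN] at hx
      obtain ⟨α, β, hab⟩ := Submodule.mem_span_pair.mp hx
      set w : ZMod (k'+1+1) → ℤ := α • Pi.single (-1 : ZMod (k'+1+1)) 1 + β • Pi.single 0 1 with hw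
      have hyφ : φl q t k' (L.mulVec w) = α • rone q t k' + β • rtwo q t k' := by
        rw [hw, Matrix.mulVec_add, map_add]
        rw [Matrix.mulVec_smul, Matrix.mulVec_smul, map_smul, map_smul]
        rw [φl_mulVec_single, φl_mulVec_single, col_neg_one, col_zero]
        simp
      have hker2 : φl q t k' (x - L.mulVec w) = 0 := by
        rw [map_sub, hyφ, hab, sub_self]
      have hx2 : x - L.mulVec w ∈ LinearMap.range L.mulVecLin := by
        apply reduce q t k' (k'+1) (by omega) (le_refl _)
        · intro i hi
          have := ZMod.val_lt i
          omega
        · exact hker2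
      have hw2 : L.mulVec w ∈ LinearMap.range L.mulVecLin := ⟨w, Matrix.mulVecLin_apply _ _⟩
      have : x = (x - L.mulVec w) + L.mulVec w := by ring
      rw [this]
      exact add_mem hx2 hw2
  have hsurj : Function.Surjective ψ := by
    intro z
    obtain ⟨w, rfl⟩ := Submodule.mkQ_surjective (NN q t k') z
    refine ⟨w 0 • Pi.single (0 : ZMod (k'+1+1)) (1:ℤ) + w 1 • Pi.single 1 1, ?_⟩
    rw [hψ, LinearMap.comp_apply, map_add, map_smul, map_smul, φl_single, φl_single,
      ZMod.val_zero, ZMod.val_one, show vv q t 0 = ![1,0] from rfl, vv_one']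
    congr 1
    funext i
    fin_cases i <;> simp
  exact ⟨(Submodule.quotEquivOfEq _ _ hker).trans (ψ.quotKerEquivOfSurjective hsurj)⟩

end Phi

lemma iSup_map_eq (r s : Fin 2 → ℤ) :
    (⨆ φ : (Fin 2 → ℤ) →ₗ[ℤ] ℤ, (Submodule.span ℤ {r, s}).map φ)
      = Ideal.span {r 0, r 1, s 0, s 1} := by
  apply le_antisymm
  · apply iSup_le
    intro φ
    rw [Submodule.map_span, Set.image_pair, Submodule.span_le]
    have hmem : ∀ w : Fin 2 → ℤ, w ∈ ({r, s} : Set (Fin 2 → ℤ)) →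
        φ w ∈ Ideal.span {r 0, r 1, s 0, s 1} := by
      intro w hw
      have hrep : w = w 0 • Pi.single (0 : Fin 2) (1:ℤ) + w 1 • Pi.single 1 1 := by
        funext i; fin_cases i <;> simp
      rw [hrep, map_add, map_smul, map_smul, smul_eq_mul, smul_eq_mul,
        mul_comm (w 0), mul_comm (w 1)]
      rcases hw with rfl | rfl
      · exact Submodule.add_mem _
          (Ideal.mul_mem_left _ _ (Ideal.subset_span (by simp)))
          (Ideal.mul_mem_left _ _ (Ideal.subset_span (by simp)))
      · exact Submodule.add_mem _
          (Ideal.mul_mem_left _ _ (Ideal.subset_span (by simp)))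
          (Ideal.mul_mem_left _ _ (Ideal.subset_span (by simp)))
    rintro x (rfl | rfl)
    · exact hmem r (by simp)
    · exact hmem s (by simp)
  · rw [Ideal.span_le]
    have h1 : ∀ (w : Fin 2 → ℤ), w ∈ Submodule.span ℤ {r, s} → ∀ i : Fin 2,
        w i ∈ ⨆ φ : (Fin 2 → ℤ) →ₗ[ℤ] ℤ, (Submodule.span ℤ {r, s}).map φ := by
      intro w hw i
      exact le_iSup (fun φ : (Fin 2 → ℤ) →ₗ[ℤ] ℤ => (Submodule.span ℤ {r, s}).map φ)
        (LinearMap.proj i) ⟨w, hw, rfl⟩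
    rintro x (rfl | rfl | rfl | rfl)
    · exact h1 r (Submodule.subset_span (by simp)) 0
    · exact h1 r (Submodule.subset_span (by simp)) 1
    · exact h1 s (Submodule.subset_span (by simp)) 0
    · exact h1 s (Submodule.subset_span (by simp)) 1

end DefWheel

/-- For integers `q ≥ 0`, `t ≥ 1`, `k ≥ 1` and `Q_k = 1 + q + ⋯ + q^k`, the
critical group of the deformed wheel graph `W̃_k(q,t)` is isomorphic to
`ℤ/d₁ℤ × ℤ/(d₁d₂)ℤ` with smaller invariant factor `d₁ = gcd(t, Q_k)`; in
particular it is cyclic iff `gcd(t, Q_k) = 1`. -/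
theorem critical_group_deformed_wheel (q t : ℤ) (hq : 0 ≤ q) (ht : 1 ≤ t)
    (k : ℕ) (hk : 1 ≤ k) :
    ∃ d₂ : ℕ, Nonempty
      (((ZMod (k + 1) → ℤ) ⧸ LinearMap.range (defWheelLap q t k).mulVecLin) ≃+
        (ZMod (Int.gcd t (∑ i ∈ Finset.range (k + 1), q ^ i)) ×
          ZMod (Int.gcd t (∑ i ∈ Finset.range (k + 1), q ^ i) * d₂))) := by
  classical
  obtain ⟨k', rfl⟩ : ∃ k', k = k' + 1 := ⟨k - 1, by omega⟩
  set Q : ℤ := ∑ i ∈ Finset.range (k' + 1 + 1), q ^ i with hQ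
  set G : ℕ := Int.gcd t Q with hG
  have hGz : (G : ℤ) ≠ 0 := by
    have hpos : 0 < G := Int.gcd_pos_iff.mpr (Or.inl (by omega))
    have : G ≠ 0 := by omega
    exact_mod_cast this
  obtain ⟨e1⟩ := DefWheel.coker_equiv q t k'
  obtain ⟨c, ⟨e2⟩, hspan⟩ := DefWheel.exists_diag (DefWheel.NN q t k')
  have hJ : Ideal.span {c 0, c 1} = Ideal.span {(G : ℤ)} := by
    rw [hspan]
    rw [show DefWheel.NN q t k'
        = Submodule.span ℤ {DefWheel.rone q t k', DefWheel.rtwo q t k'} from rfl]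
    rw [DefWheel.iSup_map_eq]
    exact DefWheel.span_entries q t k'
  have hc0 : (G:ℤ) ∣ c 0 := by
    have : c 0 ∈ Ideal.span {(G:ℤ)} := by
      rw [← hJ]; exact Ideal.subset_span (by simp)
    exact Ideal.mem_span_singleton.mp this
  have hc1 : (G:ℤ) ∣ c 1 := by
    have : c 1 ∈ Ideal.span {(G:ℤ)} := by
      rw [← hJ]; exact Ideal.subset_span (by simp)
    exact Ideal.mem_span_singleton.mp this
  obtain ⟨α, hα⟩ := hc0
  obtain ⟨β, hβ⟩ := hc1
  have hbez : (G:ℤ) ∈ Ideal.span {c 0, c 1} := by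
    rw [hJ]; exact Ideal.subset_span rfl
  obtain ⟨u, v, huv⟩ := Submodule.mem_span_pair.mp hbez
  simp only [smul_eq_mul] at huv
  have huv1 : u * α + v * β = 1 := by
    apply mul_left_cancel₀ hGz
    rw [hα, hβ] at huv
    linear_combination huv
  have hceq : (Submodule.pi Set.univ fun i => Ideal.span {c i})
      = (Submodule.pi Set.univ fun i => Ideal.span {![(G:ℤ)*α, (G:ℤ)*β] i}) := by
    congr 1
    funext i
    fin_cases i
    · simpa using congrArg (fun z => Ideal.span {z}) hα
    · simpa using congrArg (fun z => Ideal.span {z}) hβ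
  obtain ⟨e3⟩ := DefWheel.diag_transform (G:ℤ) α β u v huv1
  obtain ⟨e4⟩ := DefWheel.pi_to_zmod ![(G:ℤ), (G:ℤ)*α*β]
  simp only [Matrix.cons_val_zero, Matrix.cons_val_one, Matrix.head_cons] at e4
  have h5 : ((G:ℤ)).natAbs = G := Int.natAbs_natCast G
  have h6 : ((G:ℤ)*α*β).natAbs = G * (α*β).natAbs := by
    rw [mul_assoc, Int.natAbs_mul, Int.natAbs_natCast]
  replace e4 := e4.trans (AddEquiv.prodCongr (ZMod.ringEquivCongr h5).toAddEquiv
    (ZMod.ringEquivCongr h6).toAddEquiv)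
  refine ⟨(α*β).natAbs, ⟨?_⟩⟩
  exact (((e1.trans e2).trans
    ((Submodule.quotEquivOfEq _ _ hceq).trans e3)).toAddEquiv).trans e4
end

section
/- If k₁ divides k₂, the periodic-extension map sending a configuration (c₁,...,c_{k₁}) ∈ ℤ^{k₁} to its (k₂/k₁)-fold repetition in ℤ^{k₂} induces an injective group homomorphism from K(W_{k₁}(q,t)) = ℤ^{k₁}/Im(L₀^{(k₁)}) to K(W_{k₂}(q,t)) = ℤ^{k₂}/Im(L₀^{(k₂)}), where L₀^{(k)} = circ_k(1+q+t, −q, 0,...,0, −1). Moreover, the image of this embedding equals the kernel of (1 − ρ^{k₁}) acting on K(W_{k₂}(q,t)), where ρ is the coordinate shift. -/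
lemma natCast_ne_zero_zmod {k n : ℕ} [NeZero k] (h : ¬ k ∣ n) : ((n:ℕ) : ZMod k) ≠ 0 :=
  fun hh => h ((ZMod.natCast_eq_zero_iff n k).mp hh)

lemma wheelLap_mulVec (q t : ℤ) (k : ℕ) [NeZero k] (hk : 3 ≤ k) (c : ZMod k → ℤ)
    (i : ZMod k) :
    (wheelLap q t k).mulVec c i
      = (1 + q + t) * c i - q * c (i + 1) - c (i - 1) := by
  classical
  have h1 : (1 : ZMod k) ≠ 0 := by
    have := natCast_ne_zero_zmod (k := k) (n := 1)
      (fun h => by have := Nat.le_of_dvd one_pos h; omega)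
    simpa using this
  have h2 : (2 : ZMod k) ≠ 0 := by
    have := natCast_ne_zero_zmod (k := k) (n := 2)
      (fun h => by have := Nat.le_of_dvd two_pos h; omega)
    simpa using this
  have hne1 : i + 1 ≠ i := fun h => h1 (by linear_combination h)
  have hne2 : i - 1 ≠ i := fun h => h1 (by linear_combination -h)
  have hne3 : i + 1 ≠ i - 1 := fun h => h2 (by linear_combination h)
  have hs : ({i, i + 1, i - 1} : Finset (ZMod k)) ⊆ Finset.univ := Finset.subset_univ _
  rw [Matrix.mulVec, dotProduct]
  rw [← Finset.sum_subset hs (fun j _ hj => ?_)]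
  · rw [Finset.sum_insert (by simp [Ne.symm hne1, Ne.symm hne2]),
      Finset.sum_insert (by simp [hne3]), Finset.sum_singleton]
    simp only [wheelLap, Matrix.of_apply]
    simp only [if_true, eq_self_iff_true, if_neg hne1, if_neg hne2, if_neg hne3,
      if_neg (Ne.symm hne3)]
    ring
  · simp only [Finset.mem_insert, Finset.mem_singleton, not_or] at hj
    simp only [wheelLap, Matrix.of_apply, if_neg hj.1, if_neg hj.2.1, if_neg hj.2.2, zero_mul]

lemma wheelLap_inj (q t : ℤ) (hq : 0 ≤ q) (ht : 1 ≤ t) (k : ℕ) [NeZero k] (hk : 3 ≤ k)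
    (c : ZMod k → ℤ) (hc : (wheelLap q t k).mulVec c = 0) : c = 0 := by
  obtain ⟨i, -, hi⟩ :=
    Finset.exists_max_image Finset.univ (fun j => |c j|) ⟨0, Finset.mem_univ 0⟩
  have key : ∀ j, |c j| ≤ |c i| := fun j => hi j (Finset.mem_univ j)
  have h0 := congrFun hc i
  rw [wheelLap_mulVec q t k hk] at h0
  simp only [Pi.zero_apply] at h0
  have heq : (1 + q + t) * c i = q * c (i + 1) + c (i - 1) := by linarith
  have habs : (1 + q + t) * |c i| ≤ (q + 1) * |c i| := by
    calc (1 + q + t) * |c i| = |(1 + q + t) * c i| := by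
          rw [abs_mul, abs_of_nonneg (show (0:ℤ) ≤ 1 + q + t by linarith)]
      _ = |q * c (i + 1) + c (i - 1)| := by rw [heq]
      _ ≤ |q * c (i + 1)| + |c (i - 1)| := abs_add_le _ _
      _ = q * |c (i + 1)| + |c (i - 1)| := by rw [abs_mul, abs_of_nonneg hq]
      _ ≤ q * |c i| + |c i| := by
          have := key (i + 1); have := key (i - 1); nlinarith
      _ = (q + 1) * |c i| := by ring
  have hMz : |c i| = 0 := by nlinarith [abs_nonneg (c i)]
  funext j
  have : |c j| ≤ 0 := hMz ▸ key j
  simpa using le_antisymm this (abs_nonneg _)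

lemma lap_shift (q t : ℤ) (k : ℕ) [NeZero k] (hk : 3 ≤ k) (a : ZMod k) (x : ZMod k → ℤ) :
    (wheelLap q t k).mulVec (fun v => x (v + a))
      = fun v => (wheelLap q t k).mulVec x (v + a) := by
  funext v
  rw [wheelLap_mulVec q t k hk, wheelLap_mulVec q t k hk]
  have e1 : v + 1 + a = v + a + 1 := by ring
  have e2 : v - 1 + a = v + a - 1 := by ring
  rw [e1, e2]

lemma lap_cast (q t : ℤ) (k₁ k₂ : ℕ) [NeZero k₁] [NeZero k₂] (hk₁ : 3 ≤ k₁) (hk₂ : 3 ≤ k₂)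
    (hdvd : k₁ ∣ k₂) (c : ZMod k₁ → ℤ) :
    (wheelLap q t k₂).mulVec (fun v => c (ZMod.castHom hdvd (ZMod k₁) v))
      = fun v => (wheelLap q t k₁).mulVec c (ZMod.castHom hdvd (ZMod k₁) v) := by
  funext v
  rw [wheelLap_mulVec q t k₂ hk₂, wheelLap_mulVec q t k₁ hk₁]
  rw [map_add, map_sub, map_one]

lemma per_iter {k₂ : ℕ} [NeZero k₂] (k₁ : ℕ) (x : ZMod k₂ → ℤ)
    (hx : ∀ v, x (v + (k₁ : ZMod k₂)) = x v) :
    ∀ (j : ℕ) (v : ZMod k₂), x (v + ((j * k₁ : ℕ) : ZMod k₂)) = x v := by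
  intro j
  induction j with
  | zero => simp
  | succ n ih =>
      intro v
      have h1 : (((n + 1) * k₁ : ℕ) : ZMod k₂) = ((n * k₁ : ℕ) : ZMod k₂) + (k₁ : ZMod k₂) := by
        push_cast; ring
      rw [h1, ← add_assoc, hx, ih]

lemma periodic_factor {k₁ k₂ : ℕ} [NeZero k₁] [NeZero k₂] (hdvd : k₁ ∣ k₂)
    (x : ZMod k₂ → ℤ) (hx : ∀ v, x (v + (k₁ : ZMod k₂)) = x v) (v : ZMod k₂) :
    x v = x (((ZMod.castHom hdvd (ZMod k₁) v).val : ℕ) : ZMod k₂) := by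
  have hiter := per_iter k₁ x hx
  have hcv : (ZMod.castHom hdvd (ZMod k₁) v).val = v.val % k₁ := by
    conv_lhs => rw [← ZMod.natCast_rightInverse v]
    rw [map_natCast, ZMod.val_natCast]
  rw [hcv]
  have hsplit : ((v.val : ℕ) : ZMod k₂)
      = ((v.val % k₁ : ℕ) : ZMod k₂) + ((v.val / k₁ * k₁ : ℕ) : ZMod k₂) := by
    rw [← Nat.cast_add, Nat.mod_add_div']
  have := hiter (v.val / k₁) ((v.val % k₁ : ℕ) : ZMod k₂)
  rw [← this, ← hsplit, ZMod.natCast_rightInverse v]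

/-- If `k₁ ∣ k₂`, the periodic-extension map sending `(c₁,…,c_{k₁})` to its
`(k₂/k₁)`-fold repetition induces an injective group homomorphism
`φ : K(W_{k₁}(q,t)) → K(W_{k₂}(q,t))` between the cokernels of the reduced
Laplacians, whose image equals the kernel of the endomorphism `1 − ρ^{k₁}` of
`K(W_{k₂}(q,t))`, where `ρ` is the coordinate shift. -/
theorem periodic_extension_embedding (q t : ℤ) (hq : 0 ≤ q) (ht : 1 ≤ t)
    (k₁ k₂ : ℕ) [NeZero k₁] [NeZero k₂] (hk₁ : 3 ≤ k₁) (hk₂ : 3 ≤ k₂)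
    (hdvd : k₁ ∣ k₂) :
    ∃ φ : ((ZMod k₁ → ℤ) ⧸ LinearMap.range (wheelLap q t k₁).mulVecLin) →ₗ[ℤ]
        ((ZMod k₂ → ℤ) ⧸ LinearMap.range (wheelLap q t k₂).mulVecLin),
      ∃ δ : ((ZMod k₂ → ℤ) ⧸ LinearMap.range (wheelLap q t k₂).mulVecLin) →ₗ[ℤ]
          ((ZMod k₂ → ℤ) ⧸ LinearMap.range (wheelLap q t k₂).mulVecLin),
        (∀ c : ZMod k₁ → ℤ, φ (Submodule.Quotient.mk c) =
            Submodule.Quotient.mk (fun v => c (ZMod.castHom hdvd (ZMod k₁) v))) ∧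
        (∀ c : ZMod k₂ → ℤ, δ (Submodule.Quotient.mk c) =
            Submodule.Quotient.mk (fun v => c v - c (v + (k₁ : ZMod k₂)))) ∧
        Function.Injective φ ∧ LinearMap.range φ = LinearMap.ker δ := by
  classical
  have hk₁0 : 0 < k₁ := Nat.pos_of_ne_zero (NeZero.ne k₁)
  have hk₂0 : 0 < k₂ := Nat.pos_of_ne_zero (NeZero.ne k₂)
  set R₁ := LinearMap.range (wheelLap q t k₁).mulVecLin with hR₁
  set R₂ := LinearMap.range (wheelLap q t k₂).mulVecLin with hR₂
  set P : (ZMod k₁ → ℤ) →ₗ[ℤ] (ZMod k₂ → ℤ) :=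
    LinearMap.funLeft ℤ ℤ (ZMod.castHom hdvd (ZMod k₁)) with hP
  set Sh : (ZMod k₂ → ℤ) →ₗ[ℤ] (ZMod k₂ → ℤ) :=
    LinearMap.funLeft ℤ ℤ (fun v => v + (k₁ : ZMod k₂)) with hSh
  have hPapp : ∀ (c : ZMod k₁ → ℤ) v, P c v = c (ZMod.castHom hdvd (ZMod k₁) v) :=
    fun c v => rfl
  have hShapp : ∀ (c : ZMod k₂ → ℤ) v, Sh c v = c (v + (k₁ : ZMod k₂)) := fun c v => rfl
  have castk₁ : (ZMod.castHom hdvd (ZMod k₁)) ((k₁ : ZMod k₂)) = 0 := by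
    rw [map_natCast, ZMod.natCast_self]
  have hPper : ∀ (c : ZMod k₁ → ℤ) v, P c (v + (k₁ : ZMod k₂)) = P c v := by
    intro c v
    rw [hPapp, hPapp, map_add, castk₁, add_zero]
  -- commutation lemmas in mulVecLin form
  have hcomm : ∀ c : ZMod k₁ → ℤ,
      (wheelLap q t k₂).mulVecLin (P c) = P ((wheelLap q t k₁).mulVecLin c) := by
    intro c
    have := lap_cast q t k₁ k₂ hk₁ hk₂ hdvd c
    funext v
    rw [Matrix.mulVecLin_apply, hPapp]
    rw [Matrix.mulVecLin_apply]
    calc (wheelLap q t k₂).mulVec (P c) v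
        = (wheelLap q t k₂).mulVec (fun u => c (ZMod.castHom hdvd (ZMod k₁) u)) v := rfl
      _ = (wheelLap q t k₁).mulVec c (ZMod.castHom hdvd (ZMod k₁) v) := by rw [this]
  have hcommS : ∀ x : ZMod k₂ → ℤ,
      (wheelLap q t k₂).mulVecLin (Sh x) = Sh ((wheelLap q t k₂).mulVecLin x) := by
    intro x
    funext v
    rw [Matrix.mulVecLin_apply, hShapp, Matrix.mulVecLin_apply]
    calc (wheelLap q t k₂).mulVec (Sh x) v
        = (wheelLap q t k₂).mulVec (fun u => x (u + (k₁ : ZMod k₂))) v := rfl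
      _ = (wheelLap q t k₂).mulVec x (v + (k₁ : ZMod k₂)) := by
          rw [lap_shift q t k₂ hk₂]
  -- well-definedness conditions
  have hPle : R₁ ≤ LinearMap.ker (R₂.mkQ ∘ₗ P) := by
    rintro y ⟨x, rfl⟩
    simp only [LinearMap.mem_ker, LinearMap.comp_apply, Submodule.mkQ_apply,
      Submodule.Quotient.mk_eq_zero]
    exact ⟨P x, (hcomm x).symm ▸ (hcomm x)⟩
  have hDle : R₂ ≤ LinearMap.ker (R₂.mkQ ∘ₗ (LinearMap.id - Sh)) := by
    rintro y ⟨x, rfl⟩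
    simp only [LinearMap.mem_ker, LinearMap.comp_apply, Submodule.mkQ_apply,
      Submodule.Quotient.mk_eq_zero, LinearMap.sub_apply, LinearMap.id_apply]
    exact ⟨x - Sh x, by rw [map_sub, hcommS]⟩
  refine ⟨Submodule.liftQ R₁ (R₂.mkQ ∘ₗ P) hPle,
    Submodule.liftQ R₂ (R₂.mkQ ∘ₗ (LinearMap.id - Sh)) hDle, ?_, ?_, ?_, ?_⟩
  · intro c
    rw [Submodule.liftQ_apply]
    rfl
  · intro c
    rw [Submodule.liftQ_apply]
    rfl
  · -- injectivity
    rw [← LinearMap.ker_eq_bot, LinearMap.ker_eq_bot']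
    intro z hz
    obtain ⟨c, rfl⟩ := Submodule.Quotient.mk_surjective R₁ z
    rw [Submodule.liftQ_apply] at hz
    simp only [LinearMap.comp_apply, Submodule.mkQ_apply,
      Submodule.Quotient.mk_eq_zero] at hz
    obtain ⟨x, hx⟩ := hz
    -- L₂ x = P c; P c is k₁-periodic, so L₂ (Sh x) = L₂ x, so x is periodic
    have hLper : (wheelLap q t k₂).mulVecLin (Sh x) = (wheelLap q t k₂).mulVecLin x := by
      rw [hcommS, hx]
      funext v
      rw [hShapp, hPper]
    have hxper : ∀ v, x (v + (k₁ : ZMod k₂)) = x v := by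
      have h0 : (wheelLap q t k₂).mulVec (Sh x - x) = 0 := by
        rw [Matrix.mulVec_sub]
        rw [← Matrix.mulVecLin_apply, ← Matrix.mulVecLin_apply, hLper, sub_self]
      have := wheelLap_inj q t hq ht k₂ hk₂ _ h0
      intro v
      have h1 := congrFun this v
      simp only [Pi.sub_apply, Pi.zero_apply, sub_eq_zero] at h1
      exact h1
    set y : ZMod k₁ → ℤ := fun u => x (((u.val : ℕ) : ZMod k₂)) with hy
    have hfac : ∀ v, x v = P y v := by
      intro v
      rw [hPapp, hy]
      exact periodic_factor hdvd x hxper v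
    have hxPy : x = P y := funext hfac
    have hPc : P c = P ((wheelLap q t k₁).mulVecLin y) := by
      rw [← hx, hxPy, hcomm]
    -- P is injective since castHom is surjective
    have hc : c = (wheelLap q t k₁).mulVecLin y := by
      funext u
      have hu : (ZMod.castHom hdvd (ZMod k₁)) (((u.val : ℕ) : ZMod k₂)) = u := by
        rw [map_natCast, ZMod.natCast_rightInverse u]
      have := congrFun hPc (((u.val : ℕ) : ZMod k₂))
      rw [hPapp, hPapp, hu] at this
      exact this
    rw [Submodule.Quotient.mk_eq_zero]
    exact ⟨y, hc.symm⟩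
  · -- range = ker
    apply le_antisymm
    · rintro _ ⟨w, rfl⟩
      obtain ⟨c, rfl⟩ := Submodule.Quotient.mk_surjective R₁ w
      rw [LinearMap.mem_ker, Submodule.liftQ_apply]
      rw [show (R₂.mkQ ∘ₗ P) c = Submodule.Quotient.mk (P c) from rfl]
      rw [Submodule.liftQ_apply]
      simp only [LinearMap.comp_apply, Submodule.mkQ_apply, Submodule.Quotient.mk_eq_zero]
      have : ((LinearMap.id : (ZMod k₂ → ℤ) →ₗ[ℤ] (ZMod k₂ → ℤ)) - Sh) (P c) = 0 := by
        funext v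
        simp only [LinearMap.sub_apply, LinearMap.id_apply, Pi.sub_apply, Pi.zero_apply]
        rw [hShapp, hPper, sub_self]
      rw [this]
      exact Submodule.zero_mem R₂
    · intro z hz
      obtain ⟨c, rfl⟩ := Submodule.Quotient.mk_surjective R₂ z
      rw [LinearMap.mem_ker, Submodule.liftQ_apply] at hz
      simp only [LinearMap.comp_apply, Submodule.mkQ_apply,
        Submodule.Quotient.mk_eq_zero] at hz
      obtain ⟨x, hx⟩ := hz
      -- hx : L₂ x = c - Sh c
      have hx' : ∀ v, (wheelLap q t k₂).mulVec x v = c v - c (v + (k₁ : ZMod k₂)) := by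
        intro v
        have := congrFun hx v
        rw [Matrix.mulVecLin_apply] at this
        simpa only [LinearMap.sub_apply, LinearMap.id_apply, Pi.sub_apply, hShapp] using this
      set m := k₂ / k₁ with hm
      have hk₂eq : k₁ * m = k₂ := Nat.mul_div_cancel' hdvd
      have hm0 : 0 < m := by
        rcases Nat.eq_zero_or_pos m with h | h
        · rw [h, mul_zero] at hk₂eq; omega
        · exact h
      -- orbit sums vanish
      have hLw : (wheelLap q t k₂).mulVec
          (fun v => ∑ j ∈ Finset.range m, x (v + ((j * k₁ : ℕ) : ZMod k₂))) = 0 := by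
        funext v
        simp only [Pi.zero_apply]
        rw [wheelLap_mulVec q t k₂ hk₂]
        have hterm : ∀ j : ℕ,
            (1 + q + t) * x (v + ((j * k₁ : ℕ) : ZMod k₂))
              - q * x (v + 1 + ((j * k₁ : ℕ) : ZMod k₂))
              - x (v - 1 + ((j * k₁ : ℕ) : ZMod k₂))
            = c (v + ((j * k₁ : ℕ) : ZMod k₂)) - c (v + (((j + 1) * k₁ : ℕ) : ZMod k₂)) := by
          intro j
          have h := hx' (v + ((j * k₁ : ℕ) : ZMod k₂))
          rw [wheelLap_mulVec q t k₂ hk₂] at h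
          have e1 : v + ((j * k₁ : ℕ) : ZMod k₂) + 1 = v + 1 + ((j * k₁ : ℕ) : ZMod k₂) := by
            ring
          have e2 : v + ((j * k₁ : ℕ) : ZMod k₂) - 1 = v - 1 + ((j * k₁ : ℕ) : ZMod k₂) := by
            ring
          have e3 : v + ((j * k₁ : ℕ) : ZMod k₂) + (k₁ : ZMod k₂)
              = v + (((j + 1) * k₁ : ℕ) : ZMod k₂) := by push_cast; ring
          rw [e1, e2] at h
          rw [h, e3]
        calc (1 + q + t) * (∑ j ∈ Finset.range m, x (v + ((j * k₁ : ℕ) : ZMod k₂)))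
              - q * (∑ j ∈ Finset.range m, x (v + 1 + ((j * k₁ : ℕ) : ZMod k₂)))
              - (∑ j ∈ Finset.range m, x (v - 1 + ((j * k₁ : ℕ) : ZMod k₂)))
            = ∑ j ∈ Finset.range m,
                ((1 + q + t) * x (v + ((j * k₁ : ℕ) : ZMod k₂))
                  - q * x (v + 1 + ((j * k₁ : ℕ) : ZMod k₂))
                  - x (v - 1 + ((j * k₁ : ℕ) : ZMod k₂))) := by
              rw [Finset.mul_sum, Finset.mul_sum, ← Finset.sum_sub_distrib,
                ← Finset.sum_sub_distrib]
          _ = ∑ j ∈ Finset.range m,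
                (c (v + ((j * k₁ : ℕ) : ZMod k₂)) - c (v + (((j + 1) * k₁ : ℕ) : ZMod k₂))) :=
              Finset.sum_congr rfl (fun j _ => hterm j)
          _ = c (v + ((0 * k₁ : ℕ) : ZMod k₂)) - c (v + ((m * k₁ : ℕ) : ZMod k₂)) :=
              Finset.sum_range_sub' (fun j => c (v + ((j * k₁ : ℕ) : ZMod k₂))) m
          _ = 0 := by
              have h1 : ((m * k₁ : ℕ) : ZMod k₂) = 0 := by
                rw [mul_comm, hk₂eq, ZMod.natCast_self]
              simp [h1]
      have hw0 : ∀ v, ∑ j ∈ Finset.range m, x (v + ((j * k₁ : ℕ) : ZMod k₂)) = 0 := by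
        have := wheelLap_inj q t hq ht k₂ hk₂ _ hLw
        intro v
        have h := congrFun this v
        simpa using h
      -- construct z with z v - z (v + k₁) = x v
      set zf : ZMod k₂ → ℤ := fun v =>
        -∑ i ∈ Finset.range (v.val / k₁), x ((v.val % k₁ + i * k₁ : ℕ) : ZMod k₂) with hzf
      have hzstep : ∀ v, zf v - zf (v + (k₁ : ZMod k₂)) = x v := by
        intro v
        have hn : v.val < k₂ := ZMod.val_lt v
        have hv : ((v.val : ℕ) : ZMod k₂) = v := ZMod.natCast_rightInverse v
        have hvk : v + (k₁ : ZMod k₂) = ((v.val + k₁ : ℕ) : ZMod k₂) := by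
          rw [Nat.cast_add, hv]
        have hval : (v + (k₁ : ZMod k₂)).val = (v.val + k₁) % k₂ := by
          rw [hvk, ZMod.val_natCast]
        have hrecon : v.val % k₁ + v.val / k₁ * k₁ = v.val := Nat.mod_add_div' v.val k₁
        by_cases hcase : v.val + k₁ < k₂
        · have hval' : (v + (k₁ : ZMod k₂)).val = v.val + k₁ := by
            rw [hval, Nat.mod_eq_of_lt hcase]
          rw [hzf]
          simp only [hval', Nat.add_mod_right, Nat.add_div_right _ hk₁0,
            Finset.sum_range_succ]
          rw [hrecon, hv]
          ring
        · have hjm : v.val / k₁ = m - 1 := by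
            have h1 : v.val / k₁ < m := by
              rw [Nat.div_lt_iff_lt_mul hk₁0, mul_comm, hk₂eq]; exact hn
            have h2 : m - 1 ≤ v.val / k₁ := by
              rw [Nat.le_div_iff_mul_le hk₁0]
              have : (m - 1) * k₁ = k₂ - k₁ := by
                rw [← hk₂eq, Nat.sub_one_mul, mul_comm]
              omega
            omega
          have hsum : v.val + k₁ = v.val % k₁ + k₂ := by
            have h3 : v.val / k₁ * k₁ + k₁ = (v.val / k₁ + 1) * k₁ := by ring
            have h4 : (v.val / k₁ + 1) * k₁ = k₂ := by
              rw [hjm, Nat.sub_add_cancel hm0, mul_comm, hk₂eq]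
            omega
          have hval' : (v + (k₁ : ZMod k₂)).val = v.val % k₁ := by
            rw [hval, hsum, Nat.add_mod_right]
            exact Nat.mod_eq_of_lt (Nat.lt_of_lt_of_le (Nat.mod_lt _ hk₁0)
              (Nat.le_of_dvd hk₂0 hdvd))
          have hrk : v.val % k₁ < k₁ := Nat.mod_lt _ hk₁0
          have hz2 : zf (v + (k₁ : ZMod k₂)) = 0 := by
            rw [hzf]
            simp only [hval', Nat.div_eq_of_lt hrk, Finset.range_zero, Finset.sum_empty,
              neg_zero]
          have horbit := hw0 (((v.val % k₁ : ℕ) : ZMod k₂))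
          have horbit' : ∑ j ∈ Finset.range m, x ((v.val % k₁ + j * k₁ : ℕ) : ZMod k₂) = 0 := by
            rw [← horbit]
            refine Finset.sum_congr rfl (fun j _ => ?_)
            congr 1
            push_cast
            ring
          have hmsplit : ∑ j ∈ Finset.range m, x ((v.val % k₁ + j * k₁ : ℕ) : ZMod k₂)
              = (∑ j ∈ Finset.range (m - 1), x ((v.val % k₁ + j * k₁ : ℕ) : ZMod k₂))
                + x ((v.val % k₁ + (m - 1) * k₁ : ℕ) : ZMod k₂) := by
            conv_lhs => rw [show m = (m - 1) + 1 by omega]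
            rw [Finset.sum_range_succ]
          have hxv : x ((v.val % k₁ + (m - 1) * k₁ : ℕ) : ZMod k₂) = x v := by
            rw [← hjm, hrecon, hv]
          rw [hz2, hzf]
          simp only [hjm]
          rw [hmsplit, hxv] at horbit'
          linarith
      -- e := c - L₂ zf is periodic
      have hLx : ∀ v, (wheelLap q t k₂).mulVec x v
          = (wheelLap q t k₂).mulVec zf v - (wheelLap q t k₂).mulVec zf (v + (k₁ : ZMod k₂)) := by
        intro v
        have hzx : zf - Sh zf = x := by
          funext u
          rw [Pi.sub_apply, hShapp]
          exact hzstep u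
        conv_lhs => rw [← hzx]
        rw [Matrix.mulVec_sub, Pi.sub_apply]
        congr 1
        calc (wheelLap q t k₂).mulVec (Sh zf) v
            = (wheelLap q t k₂).mulVec (fun u => zf (u + (k₁ : ZMod k₂))) v := rfl
          _ = (wheelLap q t k₂).mulVec zf (v + (k₁ : ZMod k₂)) := by
              rw [lap_shift q t k₂ hk₂]
      have heper : ∀ v, (fun u => c u - (wheelLap q t k₂).mulVec zf u) (v + (k₁ : ZMod k₂))
          = (fun u => c u - (wheelLap q t k₂).mulVec zf u) v := by
        intro v
        simp only
        have h1 := hLx v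
        have h2 := hx' v
        linarith
      set y : ZMod k₁ → ℤ := fun u =>
        (fun w => c w - (wheelLap q t k₂).mulVec zf w) (((u.val : ℕ) : ZMod k₂)) with hy
      have hfac : ∀ v, c v - (wheelLap q t k₂).mulVec zf v = P y v := by
        intro v
        rw [hPapp, hy]
        exact periodic_factor hdvd (fun u => c u - (wheelLap q t k₂).mulVec zf u) heper v
      refine LinearMap.mem_range.mpr ⟨Submodule.Quotient.mk y, ?_⟩
      rw [Submodule.liftQ_apply]
      simp only [LinearMap.comp_apply, Submodule.mkQ_apply]
      rw [Submodule.Quotient.eq]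
      refine ⟨-zf, ?_⟩
      rw [map_neg, Matrix.mulVecLin_apply]
      funext v
      have := hfac v
      simp only [Pi.sub_apply, Pi.neg_apply]
      linarith
end
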